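/- arXiv:1305.2325 — 8 statements merged into one kernel-verified Lean document; each statement's English description precedes it below -/
import Mathlib

section
/- Let A ⊆ ℤ have positive upper (Banach) density δ = limsup_{n→∞} #(A ∩ [-n,n])/(2n+1) > 0, and let ε ∈ (0,1). For k ∈ ℤ set B_k = A ∩ (A - k) and δ_k = upper density of B_k. Then the set F = {k ∈ ℤ : δ_k > (1-ε)δ²} is syndetic, i.e., there exists a finite set R ⊆ ℤ with F + R = ℤ. -/
open Filter Topology
open scoped Classical ENNReal

noncomputable def upperDensity (A : Set ℕ) : ℝ :=
  limsup (fun n : ℕ => (((Finset.range (n+1)).filter (· ∈ A)).card : ℝ) / (n+1)) atTop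

noncomputable def lowerDensity (A : Set ℕ) : ℝ :=
  liminf (fun n : ℕ => (((Finset.range (n+1)).filter (· ∈ A)).card : ℝ) / (n+1)) atTop

noncomputable def upperDensityZ (A : Set ℤ) : ℝ :=
  limsup (fun n : ℕ => (((Finset.Icc (-(n:ℤ)) (n:ℤ)).filter (· ∈ A)).card : ℝ) / (2*n+1)) atTop

def freqHCVec {X : Type*} [NormedAddCommGroup X] [NormedSpace ℝ X]
    (T : X →L[ℝ] X) (x : X) : Prop :=
  ∀ U : Set X, IsOpen U → U.Nonempty → 0 < lowerDensity {n : ℕ | (T ^ n) x ∈ U}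

def uFreqHCVec {X : Type*} [NormedAddCommGroup X] [NormedSpace ℝ X]
    (T : X →L[ℝ] X) (x : X) : Prop :=
  ∀ U : Set X, IsOpen U → U.Nonempty → 0 < upperDensity {n : ℕ | (T ^ n) x ∈ U}

lemma filter_shift (P : ℤ → Prop) (a b t : ℤ) :
    ((Finset.Icc a b).filter (fun x => P (x + t))).card
      = ((Finset.Icc (a+t) (b+t)).filter (fun y => P y)).card := by
  rw [← Finset.map_add_right_Icc, Finset.filter_map, Finset.card_map]
  congr 1

lemma count_mono (P : ℤ → Prop) (s u : Finset ℤ) :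
    (u.filter P).card ≤ (s.filter P).card + (u \ s).card := by
  have h : u.filter P ⊆ s.filter P ∪ (u \ s) := by
    intro x hx
    simp only [Finset.mem_filter, Finset.mem_union, Finset.mem_sdiff] at *
    tauto
  exact (Finset.card_le_card h).trans (Finset.card_union_le _ _)

lemma sdiff_shift (a b t : ℤ) :
    (Finset.Icc a b \ Finset.Icc (a+t) (b+t)).card ≤ t.natAbs := by
  have hsub : Finset.Icc a b \ Finset.Icc (a+t) (b+t)
      ⊆ Finset.Icc a (a+t-1) ∪ Finset.Icc (b+t+1) b := by
    intro x hx
    simp only [Finset.mem_sdiff, Finset.mem_Icc, Finset.mem_union] at *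
    omega
  have := (Finset.card_le_card hsub).trans (Finset.card_union_le _ _)
  rw [Int.card_Icc, Int.card_Icc] at this
  omega

lemma shift_count_ge (A : Set ℤ) (n : ℕ) (t : ℤ) :
    ((Finset.Icc (-(n:ℤ)) n).filter (· ∈ A)).card
      ≤ ((Finset.Icc (-(n:ℤ)) n).filter (fun x => x + t ∈ A)).card + t.natAbs := by
  rw [filter_shift (· ∈ A) (-(n:ℤ)) n t]
  have h1 := count_mono (· ∈ A) (Finset.Icc (-(n:ℤ)+t) ((n:ℤ)+t)) (Finset.Icc (-(n:ℤ)) n)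
  have h2 := sdiff_shift (-(n:ℤ)) n t
  omega

lemma pair_count (A : Set ℤ) (n T : ℕ) (ti tj : ℤ) (hi : ti.natAbs ≤ T) :
    ((Finset.Icc (-(n:ℤ)) n).filter (fun x => x + ti ∈ A ∧ x + tj ∈ A)).card
      ≤ ((Finset.Icc (-((n+T : ℕ):ℤ)) ((n+T : ℕ):ℤ)).filter
          (fun x => x ∈ A ∧ x + (tj - ti) ∈ A)).card := by
  apply Finset.card_le_card_of_injOn (fun x => x + ti)
  · intro x hx
    simp only [Finset.mem_coe, Finset.mem_filter, Finset.mem_Icc] at hx ⊢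
    obtain ⟨⟨h1, h2⟩, h3, h4⟩ := hx
    refine ⟨⟨by push_cast; omega, by push_cast; omega⟩, h3, ?_⟩
    rwa [show x + ti + (tj - ti) = x + tj by ring]
  · intro x _ y _ h
    simpa using h

lemma exists_good_pair (A : Set ℤ) (M n T : ℕ) (hM : 2 ≤ M) (t : Fin M → ℤ)
    (hT : ∀ i, (t i).natAbs ≤ T) (c v : ℝ)
    (hv : v ≤ (((Finset.Icc (-(n:ℤ)) n).filter (· ∈ A)).card : ℝ))
    (hvT : (T:ℝ) ≤ v)
    (hnum : (M:ℝ)*(M-1)*(c * (2*((n+T:ℕ):ℝ)+1)) * (2*n+1) + M*(2*n+1)^2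
        ≤ ((M:ℝ)*(v - T))^2) :
    ∃ i j : Fin M, i < j ∧
      c * (2*((n+T:ℕ):ℝ)+1)
        ≤ (((Finset.Icc (-((n+T:ℕ):ℤ)) ((n+T:ℕ):ℤ)).filter
            (fun x => x ∈ A ∧ x + (t j - t i) ∈ A)).card : ℝ) := by
  set I := Finset.Icc (-(n:ℤ)) n with hI
  have hIcard : I.card = 2*n+1 := by rw [hI, Int.card_Icc]; omega
  set cnt : Fin M → ℕ := fun i => (I.filter (fun x => x + t i ∈ A)).card with hcnt
  set pcnt : Fin M → Fin M → ℕ :=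
    fun i j => (I.filter (fun x => x + t i ∈ A ∧ x + t j ∈ A)).card with hpcnt
  set g : ℤ → ℕ := fun x => ∑ i, if x + t i ∈ A then 1 else 0 with hg
  -- sum identities
  have hS1 : ∑ x ∈ I, g x = ∑ i, cnt i := by
    simp only [hg, hcnt, Finset.card_filter]
    rw [Finset.sum_comm]
  have hS2 : ∑ x ∈ I, (g x)^2 = ∑ i, ∑ j, pcnt i j := by
    have hx : ∀ x : ℤ, (g x)^2 = ∑ i, ∑ j, if (x + t i ∈ A ∧ x + t j ∈ A) then 1 else 0 := by
      intro x
      rw [sq, hg, Finset.sum_mul_sum]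
      refine Finset.sum_congr rfl fun i _ => Finset.sum_congr rfl fun j _ => ?_
      split_ifs with h1 h2 h3 <;> simp_all
    simp only [hx, hpcnt, Finset.card_filter]
    rw [Finset.sum_comm]
    refine Finset.sum_congr rfl fun i _ => Finset.sum_comm
  -- Cauchy-Schwarz
  have hCS : (∑ i, (cnt i:ℝ))^2 ≤ (2*(n:ℝ)+1) * ∑ i, ∑ j, (pcnt i j : ℝ) := by
    have h := sq_sum_le_card_mul_sum_sq (s := I) (f := fun x => (g x : ℝ))
    rw [hIcard] at h
    calc (∑ i, (cnt i:ℝ))^2 = (∑ x ∈ I, (g x:ℝ))^2 := by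
          rw [← Nat.cast_sum, ← Nat.cast_sum, hS1]
      _ ≤ ((2*n+1 : ℕ):ℝ) * ∑ x ∈ I, (g x:ℝ)^2 := h
      _ = (2*(n:ℝ)+1) * ∑ i, ∑ j, (pcnt i j : ℝ) := by
          have e1 : ∑ x ∈ I, ((g x:ℝ))^2 = ((∑ x ∈ I, (g x)^2 : ℕ) : ℝ) := by push_cast; rfl
          have e2 : ∑ i, ∑ j, (pcnt i j : ℝ) = ((∑ i, ∑ j, pcnt i j : ℕ) : ℝ) := by push_cast; rfl
          rw [e1, e2, hS2]; push_cast; ring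
  have hdiag : ∀ i, (pcnt i i : ℝ) ≤ 2*(n:ℝ)+1 := by
    intro i
    have h := (Finset.card_filter_le I (fun x => x + t i ∈ A ∧ x + t i ∈ A)).trans_eq hIcard
    calc (pcnt i i : ℝ) ≤ ((2*n+1 : ℕ):ℝ) := by exact_mod_cast h
      _ = 2*(n:ℝ)+1 := by push_cast; ring
  set u' : ℝ := 2*((n+T:ℕ):ℝ)+1 with hu'
  set off : ℝ := ∑ i, ∑ j ∈ Finset.univ.erase i, (pcnt i j : ℝ) with hoffdef
  have hsplit : ∑ i, ∑ j, (pcnt i j:ℝ) = ∑ i, (pcnt i i:ℝ) + off := by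
    have h : ∀ i : Fin M, ∑ j, (pcnt i j:ℝ)
        = (pcnt i i:ℝ) + ∑ j ∈ Finset.univ.erase i, (pcnt i j:ℝ) :=
      fun i => (Finset.add_sum_erase _ _ (Finset.mem_univ i)).symm
    simp only [h, hoffdef, Finset.sum_add_distrib]
  have hcntlb : ∀ i, v - T ≤ (cnt i:ℝ) := by
    intro i
    have h := (shift_count_ge A n (t i)).trans (by have := hT i; omega :
      ((Finset.Icc (-(n:ℤ)) n).filter (fun x => x + t i ∈ A)).card + (t i).natAbs
        ≤ ((Finset.Icc (-(n:ℤ)) n).filter (fun x => x + t i ∈ A)).card + T)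
    have h' : (((Finset.Icc (-(n:ℤ)) n).filter (· ∈ A)).card : ℝ) ≤ (cnt i:ℝ) + T := by
      exact_mod_cast h
    linarith [hv]
  have hsumcnt : (M:ℝ)*(v-T) ≤ ∑ i, (cnt i:ℝ) := by
    calc (M:ℝ)*(v-T) = ∑ _i : Fin M, (v-T) := by
          rw [Finset.sum_const, Finset.card_univ, Fintype.card_fin, nsmul_eq_mul]
      _ ≤ ∑ i, (cnt i:ℝ) := Finset.sum_le_sum fun i _ => hcntlb i
  have hMpos : (0:ℝ) < M := by positivity
  have hvT' : (0:ℝ) ≤ (M:ℝ)*(v-T) := by nlinarith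
  have hsq : ((M:ℝ)*(v-T))^2 ≤ (∑ i, (cnt i:ℝ))^2 := by
    exact pow_le_pow_left₀ hvT' hsumcnt 2
  have hDsum : ∑ i, (pcnt i i:ℝ) ≤ (M:ℝ)*(2*(n:ℝ)+1) := by
    calc ∑ i, (pcnt i i:ℝ) ≤ ∑ _i : Fin M, (2*(n:ℝ)+1) :=
          Finset.sum_le_sum fun i _ => hdiag i
      _ = (M:ℝ)*(2*(n:ℝ)+1) := by
          rw [Finset.sum_const, Finset.card_univ, Fintype.card_fin, nsmul_eq_mul]
  have hnpos : (0:ℝ) < 2*(n:ℝ)+1 := by positivity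
  have hoff : (M:ℝ)*((M:ℝ)-1)*(c*u') ≤ off := by
    have key : ((M:ℝ)*((M:ℝ)-1)*(c*u')) * (2*(n:ℝ)+1) ≤ off * (2*(n:ℝ)+1) := by
      rw [hsplit] at hCS
      nlinarith [hnum, hsq, hCS, hDsum]
    exact le_of_mul_le_mul_right key hnpos
  have hne : (Finset.univ : Finset (Fin M)).Nonempty := by
    rw [← Finset.card_pos, Finset.card_univ, Fintype.card_fin]; omega
  obtain ⟨i, -, hi⟩ := Finset.exists_le_of_sum_le hne
    (show ∑ _i : Fin M, ((M:ℝ)-1)*(c*u') ≤ ∑ i, ∑ j ∈ Finset.univ.erase i, (pcnt i j:ℝ) by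
      rw [Finset.sum_const, Finset.card_univ, Fintype.card_fin, nsmul_eq_mul]
      rw [← mul_assoc]; exact hoff)
  have herase_card : (Finset.univ.erase i).card = M - 1 := by
    rw [Finset.card_erase_of_mem (Finset.mem_univ i), Finset.card_univ, Fintype.card_fin]
  have herase_ne : (Finset.univ.erase i).Nonempty := by
    rw [← Finset.card_pos, herase_card]; omega
  obtain ⟨j, hjmem, hj⟩ := Finset.exists_le_of_sum_le herase_ne
    (show ∑ _j ∈ Finset.univ.erase i, (c*u') ≤ ∑ j ∈ Finset.univ.erase i, (pcnt i j:ℝ) by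
      rw [Finset.sum_const, herase_card, nsmul_eq_mul]
      have hcast : ((M-1:ℕ):ℝ) = (M:ℝ)-1 := by
        have : 1 ≤ M := by omega
        push_cast [this]; ring
      rw [hcast]; exact hi)
  have hji : j ≠ i := Finset.ne_of_mem_erase hjmem
  rcases lt_or_gt_of_ne hji with hlt | hgt
  · -- j < i : use pair (j, i), predicate order in pcnt i j must be swapped
    have hswap : pcnt i j = pcnt j i := by
      simp only [hpcnt]
      congr 1
      exact Finset.filter_congr fun x _ => and_comm
    refine ⟨j, i, hlt, ?_⟩
    have hpc := pair_count A n T (t j) (t i) (hT j)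
    have hpc' : (pcnt j i : ℝ) ≤ _ := Nat.cast_le.mpr hpc
    rw [hswap] at hj
    exact hj.trans hpc'
  · refine ⟨i, j, hgt, ?_⟩
    have hpc := pair_count A n T (t i) (t j) (hT i)
    have hpc' : (pcnt i j : ℝ) ≤ _ := Nat.cast_le.mpr hpc
    exact hj.trans hpc'

lemma densZ_ge (B : Set ℤ) (P : ℤ → Prop) [DecidablePred P] (hP : ∀ x, x ∈ B ↔ P x) (c : ℝ)
    (hfr : ∃ᶠ n : ℕ in atTop, c * (2*(n:ℝ)+1)
      ≤ (((Finset.Icc (-(n:ℤ)) (n:ℤ)).filter P).card : ℝ)) :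
    c ≤ upperDensityZ B := by
  have hc : ∀ m : ℕ, (((Finset.Icc (-(m:ℤ)) (m:ℤ)).filter (· ∈ B)).card : ℝ)
      = (((Finset.Icc (-(m:ℤ)) (m:ℤ)).filter P).card : ℝ) := fun m => by
    exact_mod_cast congrArg Finset.card (Finset.filter_congr fun x _ => hP x)
  rw [upperDensityZ]
  apply le_limsup_of_frequently_le
  · refine hfr.mono fun m hm => ?_
    have hpos : (0:ℝ) < 2*(m:ℝ)+1 := by positivity
    rw [le_div_iff₀ hpos, hc m]
    exact hm
  · refine isBoundedUnder_of ⟨1, fun m => ?_⟩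
    show (((Finset.Icc (-(m:ℤ)) (m:ℤ)).filter (· ∈ B)).card : ℝ) / (2*m+1) ≤ 1
    have hpos : (0:ℝ) < 2*(m:ℝ)+1 := by positivity
    rw [div_le_one hpos]
    have hcard := Finset.card_filter_le (Finset.Icc (-(m:ℤ)) (m:ℤ)) (· ∈ B)
    have hIc : (Finset.Icc (-(m:ℤ)) (m:ℤ)).card = 2*m+1 := by rw [Int.card_Icc]; omega
    calc (((Finset.Icc (-(m:ℤ)) (m:ℤ)).filter (· ∈ B)).card : ℝ)
        ≤ ((2*m+1 : ℕ):ℝ) := by exact_mod_cast hcard.trans_eq hIc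
      _ ≤ 2*(m:ℝ)+1 := by push_cast; linarith

lemma keyA (A : Set ℤ) (δ η c : ℝ) (hδ : δ = upperDensityZ A) (hδη : 0 < δ - η)
    (hη : 0 < η) (M : ℕ) (hM : 2 ≤ M)
    (hkey : c < ((M:ℝ)*(δ-η)^2 - 1)/((M:ℝ)-1)) (t : Fin M → ℤ) :
    ∃ i j : Fin M, i < j ∧
      c < upperDensityZ {x : ℤ | x ∈ A ∧ x + (t j - t i) ∈ A} := by
  have hM1 : (1:ℝ) ≤ (M:ℝ) - 1 := by
    have : (2:ℝ) ≤ (M:ℝ) := by exact_mod_cast hM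
    linarith
  have hMpos : (0:ℝ) < M := by positivity
  set T : ℕ := Finset.univ.sup (fun i => (t i).natAbs) with hTdef
  have hT : ∀ i, (t i).natAbs ≤ T := fun i => by rw [hTdef]; exact Finset.le_sup (f := fun i => (t i).natAbs) (Finset.mem_univ i)
  set c' : ℝ := (c + ((M:ℝ)*(δ-η)^2 - 1)/((M:ℝ)-1))/2 with hc'def
  have hc1 : c < c' := by rw [hc'def]; linarith
  have hc2 : c' < ((M:ℝ)*(δ-η)^2 - 1)/((M:ℝ)-1) := by rw [hc'def]; linarith
  set K2 : ℝ := (M:ℝ)^2*(δ-η)^2 - M - M*((M:ℝ)-1)*c' with hK2def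
  have hK2 : 0 < K2 := by
    rw [hK2def]
    have h2 : c' * ((M:ℝ)-1) < (M:ℝ)*(δ-η)^2 - 1 :=
      (lt_div_iff₀ (by linarith : (0:ℝ) < (M:ℝ)-1)).mp hc2
    nlinarith
  set K1 : ℝ := 2*(M:ℝ)^2*(δ-η)*T + 2*T*M*((M:ℝ)-1)*c' with hK1def
  -- eventual numeric conditions
  have hEv : ∀ᶠ n : ℕ in atTop, K1 ≤ K2 * (2*(n:ℝ)+1) ∧ (T:ℝ) ≤ (δ-η)*(2*(n:ℝ)+1) := by
    set N : ℕ := ⌈max (K1/K2) ((T:ℝ)/(δ-η))⌉₊ with hNdef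
    refine eventually_atTop.mpr ⟨N, fun n hn => ?_⟩
    have hx : max (K1/K2) ((T:ℝ)/(δ-η)) ≤ (n:ℝ) := by
      refine le_trans (Nat.le_ceil _) ?_
      exact_mod_cast hn
    have hn0 : (0:ℝ) ≤ (n:ℝ) := Nat.cast_nonneg n
    constructor
    · have h1 : K1/K2 ≤ (n:ℝ) := le_trans (le_max_left _ _) hx
      rw [div_le_iff₀ hK2] at h1
      nlinarith
    · have h2 : (T:ℝ)/(δ-η) ≤ (n:ℝ) := le_trans (le_max_right _ _) hx
      rw [div_le_iff₀ hδη] at h2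
      nlinarith
  -- frequently the density is close to δ
  have hfreq : ∃ᶠ n : ℕ in atTop,
      (δ-η)*(2*(n:ℝ)+1) < (((Finset.Icc (-(n:ℤ)) n).filter (· ∈ A)).card : ℝ) := by
    have hcb : IsCoboundedUnder (· ≤ ·) atTop
        (fun n : ℕ => (((Finset.Icc (-(n:ℤ)) (n:ℤ)).filter (· ∈ A)).card : ℝ) / (2*n+1)) :=
      by
      refine IsBoundedUnder.isCoboundedUnder_le ⟨0, ?_⟩
      rw [Filter.eventually_map]
      exact Eventually.of_forall fun (n : ℕ) => by
        show (0:ℝ) ≤ (((Finset.Icc (-(n:ℤ)) (n:ℤ)).filter (· ∈ A)).card : ℝ) / (2*n+1)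
        positivity
    have hlt : δ - η < limsup (fun n : ℕ =>
        (((Finset.Icc (-(n:ℤ)) (n:ℤ)).filter (· ∈ A)).card : ℝ) / (2*n+1)) atTop := by
      rw [upperDensityZ] at hδ
      rw [← hδ]; linarith
    refine (frequently_lt_of_lt_limsup hcb hlt).mono fun n h => ?_
    have hpos : (0:ℝ) < 2*(n:ℝ)+1 := by positivity
    rw [lt_div_iff₀ hpos] at h
    linarith
  have hmain : ∃ᶠ n : ℕ in atTop, ∃ i j : Fin M, i < j ∧
      c' * (2*((n+T:ℕ):ℝ)+1)
        ≤ (((Finset.Icc (-((n+T:ℕ):ℤ)) ((n+T:ℕ):ℤ)).filter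
            (fun x => x ∈ A ∧ x + (t j - t i) ∈ A)).card : ℝ) := by
    refine (hfreq.and_eventually hEv).mono ?_
    rintro n ⟨h1, h2, h3⟩
    refine exists_good_pair A M n T hM t hT c' ((δ-η)*(2*(n:ℝ)+1)) h1.le h3 ?_
    have hu : ((n+T:ℕ):ℝ) = (n:ℝ) + T := by push_cast; ring
    rw [hu]
    have hu0 : (0:ℝ) ≤ 2*(n:ℝ)+1 := by positivity
    rw [hK1def, hK2def] at h2
    nlinarith [mul_nonneg (sub_nonneg.mpr h2) hu0, sq_nonneg ((M:ℝ)*(T:ℝ))]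
  have hpair : ∃ i j : Fin M, i < j ∧ ∃ᶠ n : ℕ in atTop,
      c' * (2*((n+T:ℕ):ℝ)+1)
        ≤ (((Finset.Icc (-((n+T:ℕ):ℤ)) ((n+T:ℕ):ℤ)).filter
            (fun x => x ∈ A ∧ x + (t j - t i) ∈ A)).card : ℝ) := by
    by_contra hcon
    push_neg at hcon
    have hall : ∀ᶠ n : ℕ in atTop, ∀ p : Fin M × Fin M, p.1 < p.2 →
        ¬ (c' * (2*((n+T:ℕ):ℝ)+1)
          ≤ (((Finset.Icc (-((n+T:ℕ):ℤ)) ((n+T:ℕ):ℤ)).filter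
              (fun x => x ∈ A ∧ x + (t p.2 - t p.1) ∈ A)).card : ℝ)) := by
      rw [Filter.eventually_all]
      intro p
      by_cases hp : p.1 < p.2
      · exact ((hcon p.1 p.2 hp).mono fun n hn => fun _ => not_le.mpr hn)
      · exact Eventually.of_forall fun n h' => absurd h' hp
    obtain ⟨n, hmn, hAll⟩ := (hmain.and_eventually hall).exists
    obtain ⟨i, j, hij, hb⟩ := hmn
    exact hAll (i, j) hij hb
  obtain ⟨i, j, hij, hfr⟩ := hpair
  refine ⟨i, j, hij, lt_of_lt_of_le hc1 ?_⟩
  have hfr2 : ∃ᶠ m : ℕ in atTop, c' * (2*(m:ℝ)+1)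
      ≤ (((Finset.Icc (-(m:ℤ)) (m:ℤ)).filter
          (fun x => x ∈ A ∧ x + (t j - t i) ∈ A)).card : ℝ) :=
    Filter.Tendsto.frequently (tendsto_add_atTop_nat T)
      (p := fun m : ℕ => c' * (2*(m:ℝ)+1)
        ≤ (((Finset.Icc (-(m:ℤ)) (m:ℤ)).filter
            (fun x => x ∈ A ∧ x + (t j - t i) ∈ A)).card : ℝ)) hfr
  exact densZ_ge _ _ (fun x => Iff.rfl) c' hfr2

theorem stmt0 (A : Set ℤ) (δ ε : ℝ) (hδ : δ = upperDensityZ A) (hδpos : 0 < δ)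
    (hε : ε ∈ Set.Ioo (0:ℝ) 1) :
    ∃ R : Finset ℤ, ∀ n : ℤ,
      ∃ f ∈ {k : ℤ | (1 - ε) * δ ^ 2 < upperDensityZ {x : ℤ | x ∈ A ∧ x + k ∈ A}},
        ∃ r ∈ R, n = f + r := by
  obtain ⟨hε0, hε1⟩ := hε
  have hδ2 : 0 < δ^2 := by positivity
  set M : ℕ := ⌈(1 - (1-ε)*δ^2)/(ε*δ^2)⌉₊ + 2 with hMdef
  have hM : 2 ≤ M := by omega
  have hM1 : (1:ℝ) ≤ (M:ℝ) - 1 := by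
    have : (2:ℕ) ≤ M := hM
    have h2 : (2:ℝ) ≤ (M:ℝ) := by exact_mod_cast this
    linarith
  have hMgt : (1 - (1-ε)*δ^2)/(ε*δ^2) < (M:ℝ) := by
    refine lt_of_le_of_lt (Nat.le_ceil _) ?_
    rw [hMdef]
    push_cast
    linarith
  have key0 : (1-ε)*δ^2 < ((M:ℝ)*δ^2 - 1)/((M:ℝ)-1) := by
    rw [lt_div_iff₀ (by linarith : (0:ℝ) < (M:ℝ)-1)]
    rw [div_lt_iff₀ (by positivity : (0:ℝ) < ε*δ^2)] at hMgt
    nlinarith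
  -- choose η
  have hcont : Continuous (fun η : ℝ => ((M:ℝ)*(δ-η)^2 - 1)/((M:ℝ)-1)) := by
    apply Continuous.div_const
    fun_prop
  have hf0 : (1-ε)*δ^2 < ((M:ℝ)*(δ-0)^2 - 1)/((M:ℝ)-1) := by simpa using key0
  have hev1 : ∀ᶠ η in 𝓝 (0:ℝ), (1-ε)*δ^2 < ((M:ℝ)*(δ-η)^2 - 1)/((M:ℝ)-1) :=
    (hcont.continuousAt (x := 0)).eventually (eventually_gt_nhds hf0)
  have hev2 : ∀ᶠ η in 𝓝 (0:ℝ), η < δ := eventually_lt_nhds hδpos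
  have hev : ∀ᶠ η in 𝓝[>] (0:ℝ),
      ((1-ε)*δ^2 < ((M:ℝ)*(δ-η)^2 - 1)/((M:ℝ)-1) ∧ η < δ) ∧ η ∈ Set.Ioi (0:ℝ) :=
    (((hev1.and hev2).filter_mono nhdsWithin_le_nhds).and eventually_mem_nhdsWithin)
  obtain ⟨η, ⟨hkeyη, hηδ⟩, hη0⟩ := hev.exists
  -- contradiction setup
  by_contra hcon
  push_neg at hcon
  choose g hg using hcon
  set l : ℕ → Finset ℤ := fun k => Nat.rec ∅ (fun _ s => insert (g s) s) k with hldef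
  have hstep : ∀ k, l k ⊆ l (k+1) := fun k => Finset.subset_insert _ _
  have hmono : Monotone l := monotone_nat_of_le_succ hstep
  have hmem : ∀ k, g (l k) ∈ l (k+1) := fun k => Finset.mem_insert_self _ _
  have hprop : ∀ (a b : ℕ), a < b →
      g (l b) - g (l a) ∉ {k : ℤ | (1 - ε) * δ ^ 2 < upperDensityZ {x : ℤ | x ∈ A ∧ x + k ∈ A}} := by
    intro a b hab hmemF
    have ha : g (l a) ∈ l b := hmono (by omega : a+1 ≤ b) (hmem a)
    have hneq := hg (l b) (g (l b) - g (l a)) hmemF (g (l a)) ha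
    exact hneq (by ring)
  obtain ⟨i, j, hij, hgt⟩ := keyA A δ η ((1-ε)*δ^2) hδ (by linarith) hη0 M hM hkeyη
    (fun i : Fin M => g (l i.val))
  exact hprop i.val j.val hij hgt
end

section
/- Let A ⊆ ℤ have upper density δ > 0 and ε ∈ (0,1). If R ⊆ ℤ is a finite set such that for all distinct k, l ∈ R the upper density (along a fixed subsequence (m_i) on which all densities η_j = lim #B_j(m_i)/(2m_i+1) exist) satisfies η_{k-l} ≤ (1-ε)δ², then #R ≤ (1 - δ(1-ε))/(δε). -/
open Filter Topology
open scoped Classical ENNReal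

private lemma card_Icc_int (m : ℕ) : (Finset.Icc (-(m:ℤ)) (m:ℤ)).card = 2*m+1 := by
  rw [Int.card_Icc]; omega

private lemma count_shift_le (P : ℤ → Prop) (k : ℤ) (m : ℕ) :
    ((Finset.Icc (-(m:ℤ)) (m:ℤ)).filter (fun x => P (x + k))).card ≤
    ((Finset.Icc (-(m:ℤ)) (m:ℤ)).filter P).card + 2 * k.natAbs := by
  classical
  set S := Finset.Icc (-(m:ℤ)) (m:ℤ) with hS
  have him : (S.filter (fun x => P (x + k))).image (· + k) ⊆
      (S.filter P) ∪ ((Finset.Icc (-(m:ℤ)+k) (-(m:ℤ)-1)) ∪ (Finset.Icc ((m:ℤ)+1) ((m:ℤ)+k))) := by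
    intro y hy
    simp only [Finset.mem_image, Finset.mem_filter, Finset.mem_Icc, hS] at hy
    obtain ⟨x, ⟨⟨hx1, hx2⟩, hP⟩, rfl⟩ := hy
    by_cases h : -(m:ℤ) ≤ x + k ∧ x + k ≤ (m:ℤ)
    · apply Finset.mem_union_left
      simp only [Finset.mem_filter, Finset.mem_Icc, hS]
      exact ⟨⟨h.1, h.2⟩, hP⟩
    · apply Finset.mem_union_right
      simp only [Finset.mem_union, Finset.mem_Icc]
      omega
  calc (S.filter (fun x => P (x + k))).card
      = ((S.filter (fun x => P (x + k))).image (· + k)).card :=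
        (Finset.card_image_of_injective _ (add_left_injective k)).symm
    _ ≤ ((S.filter P) ∪ ((Finset.Icc (-(m:ℤ)+k) (-(m:ℤ)-1)) ∪ (Finset.Icc ((m:ℤ)+1) ((m:ℤ)+k)))).card :=
        Finset.card_le_card him
    _ ≤ (S.filter P).card + ((Finset.Icc (-(m:ℤ)+k) (-(m:ℤ)-1)) ∪ (Finset.Icc ((m:ℤ)+1) ((m:ℤ)+k))).card :=
        Finset.card_union_le _ _
    _ ≤ (S.filter P).card + ((Finset.Icc (-(m:ℤ)+k) (-(m:ℤ)-1)).card + (Finset.Icc ((m:ℤ)+1) ((m:ℤ)+k)).card) :=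
        Nat.add_le_add_left (Finset.card_union_le _ _) _
    _ ≤ (S.filter P).card + 2 * k.natAbs := by
        rw [Int.card_Icc, Int.card_Icc]; omega

private lemma count_shift_ge (P : ℤ → Prop) (k : ℤ) (m : ℕ) :
    ((Finset.Icc (-(m:ℤ)) (m:ℤ)).filter P).card ≤
    ((Finset.Icc (-(m:ℤ)) (m:ℤ)).filter (fun x => P (x + k))).card + 2 * k.natAbs := by
  have h := count_shift_le (fun x => P (x + k)) (-k) m
  simp only [neg_add_cancel_right, Int.natAbs_neg] at h
  exact h

theorem stmt1 (A : Set ℤ) (δ ε : ℝ) (hδpos : 0 < δ) (hε : ε ∈ Set.Ioo (0:ℝ) 1)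
    (hδup : δ = upperDensityZ A)
    (m : ℕ → ℕ) (hm : StrictMono m)
    (hδ : Tendsto
      (fun i : ℕ => (((Finset.Icc (-(m i : ℤ)) (m i : ℤ)).filter (· ∈ A)).card : ℝ) / (2 * (m i) + 1))
      atTop (nhds δ))
    (η : ℤ → ℝ)
    (hη : ∀ k : ℤ, Tendsto
      (fun i : ℕ => (((Finset.Icc (-(m i : ℤ)) (m i : ℤ)).filter
          (fun x : ℤ => x ∈ A ∧ x + k ∈ A)).card : ℝ) / (2 * (m i) + 1))
      atTop (nhds (η k)))
    (R : Finset ℤ)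
    (hR : ∀ k ∈ R, ∀ l ∈ R, k ≠ l → η (k - l) ≤ (1 - ε) * δ ^ 2) :
    (R.card : ℝ) ≤ (1 - δ * (1 - ε)) / (δ * ε) := by
  classical
  obtain ⟨hε0, hε1⟩ := hε
  have hδ0 : (0:ℝ) ≤ δ := hδpos.le
  have hcpos : ∀ i : ℕ, (0:ℝ) < 2 * (m i : ℝ) + 1 := fun i => by positivity
  -- δ ≤ 1
  have hδ1 : δ ≤ 1 := by
    refine le_of_tendsto' hδ fun i => ?_
    rw [div_le_one (hcpos i)]
    calc ((((Finset.Icc (-(m i : ℤ)) (m i : ℤ)).filter (· ∈ A)).card : ℝ))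
        ≤ ((Finset.Icc (-(m i : ℤ)) (m i : ℤ)).card : ℝ) := by
          exact_mod_cast Finset.card_le_card (Finset.filter_subset _ _)
      _ = 2 * (m i : ℝ) + 1 := by rw [card_Icc_int]; push_cast; ring
  rcases Nat.eq_zero_or_pos R.card with hr0 | hrpos
  · rw [hr0]
    push_cast
    apply div_nonneg _ (by positivity)
    nlinarith
  have hr1 : (1:ℝ) ≤ (R.card : ℝ) := by exact_mod_cast hrpos
  -- notation
  set N : ℤ → ℕ := fun x => (R.filter (fun k => x + k ∈ A)).card with hN
  set C : ℕ := ∑ k ∈ R, 2 * k.natAbs with hC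
  -- sum identities
  have hsum1 : ∀ i : ℕ, ∑ x ∈ Finset.Icc (-(m i : ℤ)) (m i : ℤ), N x
      = ∑ k ∈ R, ((Finset.Icc (-(m i : ℤ)) (m i : ℤ)).filter (fun x => x + k ∈ A)).card := by
    intro i
    simp only [hN, Finset.card_filter]
    rw [Finset.sum_comm]
  have hsum2 : ∀ i : ℕ, ∑ x ∈ Finset.Icc (-(m i : ℤ)) (m i : ℤ), (N x)^2
      = ∑ k ∈ R, ∑ l ∈ R, ((Finset.Icc (-(m i : ℤ)) (m i : ℤ)).filter
          (fun x => x + k ∈ A ∧ x + l ∈ A)).card := by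
    intro i
    have hx : ∀ x : ℤ, (N x)^2 = ∑ k ∈ R, ∑ l ∈ R, if x + k ∈ A ∧ x + l ∈ A then 1 else 0 := by
      intro x
      rw [sq, hN]
      simp only [Finset.card_filter]
      rw [Finset.sum_mul_sum]
      refine Finset.sum_congr rfl fun k _ => Finset.sum_congr rfl fun l _ => ?_
      by_cases h1 : x + k ∈ A <;> by_cases h2 : x + l ∈ A <;> simp [h1, h2]
    simp only [hx, Finset.card_filter]
    rw [Finset.sum_comm]
    refine Finset.sum_congr rfl fun k _ => ?_
    rw [Finset.sum_comm]
  -- lower bound for the first moment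
  have hlow : ∀ i : ℕ, R.card * ((Finset.Icc (-(m i : ℤ)) (m i : ℤ)).filter (· ∈ A)).card
      ≤ (∑ x ∈ Finset.Icc (-(m i : ℤ)) (m i : ℤ), N x) + C := by
    intro i
    calc R.card * ((Finset.Icc (-(m i : ℤ)) (m i : ℤ)).filter (· ∈ A)).card
        = ∑ _k ∈ R, ((Finset.Icc (-(m i : ℤ)) (m i : ℤ)).filter (· ∈ A)).card := by
          rw [Finset.sum_const, smul_eq_mul]
      _ ≤ ∑ k ∈ R, (((Finset.Icc (-(m i : ℤ)) (m i : ℤ)).filter (fun x => x + k ∈ A)).card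
            + 2 * k.natAbs) := by
          refine Finset.sum_le_sum fun k _ => ?_
          exact count_shift_ge (· ∈ A) k (m i)
      _ = (∑ k ∈ R, ((Finset.Icc (-(m i : ℤ)) (m i : ℤ)).filter (fun x => x + k ∈ A)).card) + C := by
          rw [Finset.sum_add_distrib, hC]
      _ = (∑ x ∈ Finset.Icc (-(m i : ℤ)) (m i : ℤ), N x) + C := by rw [hsum1 i]
  -- upper bound for the second moment
  have hupp : ∀ i : ℕ, (∑ x ∈ Finset.Icc (-(m i : ℤ)) (m i : ℤ), (N x)^2)
      ≤ (∑ k ∈ R, ∑ l ∈ R, ((Finset.Icc (-(m i : ℤ)) (m i : ℤ)).filter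
          (fun x => x ∈ A ∧ x + (l - k) ∈ A)).card) + R.card * C := by
    intro i
    rw [hsum2 i]
    calc ∑ k ∈ R, ∑ l ∈ R, ((Finset.Icc (-(m i : ℤ)) (m i : ℤ)).filter
          (fun x => x + k ∈ A ∧ x + l ∈ A)).card
        ≤ ∑ k ∈ R, ∑ l ∈ R, (((Finset.Icc (-(m i : ℤ)) (m i : ℤ)).filter
            (fun x => x ∈ A ∧ x + (l - k) ∈ A)).card + 2 * k.natAbs) := by
          refine Finset.sum_le_sum fun k _ => Finset.sum_le_sum fun l _ => ?_
          have h := count_shift_le (fun y => y ∈ A ∧ y + (l - k) ∈ A) k (m i)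
          simp only [show ∀ x : ℤ, x + k + (l - k) = x + l from fun x => by ring,
            Finset.filter_congr_decidable] at h
          convert h using 3
          exacts [rfl, (Finset.filter_congr_decidable _ (fun x => x ∈ A ∧ x + (l - k) ∈ A) _).symm]
      _ = (∑ k ∈ R, ∑ l ∈ R, ((Finset.Icc (-(m i : ℤ)) (m i : ℤ)).filter
            (fun x => x ∈ A ∧ x + (l - k) ∈ A)).card) + R.card * C := by
          have : ∀ k ∈ R, ∑ l ∈ R, (((Finset.Icc (-(m i : ℤ)) (m i : ℤ)).filter
              (fun x => x ∈ A ∧ x + (l - k) ∈ A)).card + 2 * k.natAbs)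
              = (∑ l ∈ R, ((Finset.Icc (-(m i : ℤ)) (m i : ℤ)).filter
                (fun x => x ∈ A ∧ x + (l - k) ∈ A)).card) + R.card * (2 * k.natAbs) := by
            intro k _
            rw [Finset.sum_add_distrib, Finset.sum_const, smul_eq_mul]
          rw [Finset.sum_congr rfl this, Finset.sum_add_distrib, hC, Finset.mul_sum]
  -- limit machinery
  have hmtop : Tendsto (fun i => (m i : ℝ)) atTop atTop :=
    tendsto_natCast_atTop_atTop.comp (tendsto_atTop_mono hm.id_le tendsto_id)
  have hctop : Tendsto (fun i : ℕ => 2 * (m i : ℝ) + 1) atTop atTop :=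
    tendsto_atTop_add_const_right _ 1 (Tendsto.const_mul_atTop two_pos hmtop)
  have hdiv0 : ∀ K : ℝ, Tendsto (fun i : ℕ => K / (2 * (m i : ℝ) + 1)) atTop (nhds 0) :=
    fun K => Tendsto.div_atTop tendsto_const_nhds hctop
  -- η 0 = δ
  have hη0 : η 0 = δ := by
    have heq : ∀ i : ℕ, ((Finset.Icc (-(m i : ℤ)) (m i : ℤ)).filter
        (fun x : ℤ => x ∈ A ∧ x + 0 ∈ A)) = ((Finset.Icc (-(m i : ℤ)) (m i : ℤ)).filter (· ∈ A)) := by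
      intro i
      refine Finset.filter_congr fun x _ => ?_
      simp
    refine tendsto_nhds_unique ?_ hδ
    have h0 := hη 0
    simp only [heq] at h0
    exact h0
  -- the two approximating sequences
  set u : ℕ → ℝ := fun i => (R.card : ℝ) *
      ((((Finset.Icc (-(m i : ℤ)) (m i : ℤ)).filter (· ∈ A)).card : ℝ) / (2 * (m i) + 1))
      - (C : ℝ) / (2 * (m i) + 1) with hu_def
  have hu : Tendsto u atTop (nhds ((R.card : ℝ) * δ)) := by
    have h := (hδ.const_mul (R.card : ℝ)).sub (hdiv0 (C : ℝ))
    simpa using h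
  set v : ℕ → ℝ := fun i => (∑ k ∈ R, ∑ l ∈ R,
      ((((Finset.Icc (-(m i : ℤ)) (m i : ℤ)).filter
        (fun x : ℤ => x ∈ A ∧ x + (l - k) ∈ A)).card : ℝ) / (2 * (m i) + 1)))
      + ((R.card : ℝ) * C) / (2 * (m i) + 1) with hv_def
  have hv : Tendsto v atTop (nhds (∑ k ∈ R, ∑ l ∈ R, η (l - k))) := by
    have h1 : Tendsto (fun i : ℕ => ∑ k ∈ R, ∑ l ∈ R,
        ((((Finset.Icc (-(m i : ℤ)) (m i : ℤ)).filter
          (fun x : ℤ => x ∈ A ∧ x + (l - k) ∈ A)).card : ℝ) / (2 * (m i) + 1))) atTop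
        (nhds (∑ k ∈ R, ∑ l ∈ R, η (l - k))) :=
      tendsto_finset_sum _ fun k _ => tendsto_finset_sum _ fun l _ => hη (l - k)
    simpa using h1.add (hdiv0 ((R.card : ℝ) * C))
  -- pointwise inequality
  have hkey : ∀ i : ℕ, (max (u i) 0)^2 ≤ v i := by
    intro i
    have hci := hcpos i
    set SN : ℝ := ((∑ x ∈ Finset.Icc (-(m i : ℤ)) (m i : ℤ), N x : ℕ) : ℝ) with hSN_def
    set SQ : ℝ := ((∑ x ∈ Finset.Icc (-(m i : ℤ)) (m i : ℤ), (N x)^2 : ℕ) : ℝ) with hSQ_def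
    set c : ℝ := 2 * (m i : ℝ) + 1 with hc_def
    have hL0 : (0:ℝ) ≤ SN / c := div_nonneg (Nat.cast_nonneg _) hci.le
    have huL : u i ≤ SN / c := by
      have hlow' : (R.card : ℝ) * (((Finset.Icc (-(m i : ℤ)) (m i : ℤ)).filter (· ∈ A)).card : ℝ)
          ≤ SN + C := by
        rw [hSN_def]; exact_mod_cast hlow i
      have hrw : u i = ((R.card : ℝ) *
          (((Finset.Icc (-(m i : ℤ)) (m i : ℤ)).filter (· ∈ A)).card : ℝ) - C) / c := by
        simp only [hu_def, hc_def]; ring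
      rw [hrw]
      gcongr
      linarith [hlow']
    have hCS : (SN / c)^2 ≤ SQ / c := by
      have hcs := sq_sum_le_card_mul_sum_sq
        (s := Finset.Icc (-(m i : ℤ)) (m i : ℤ)) (f := fun x => (N x : ℝ))
      have hcard : (((Finset.Icc (-(m i : ℤ)) (m i : ℤ)).card : ℝ)) = c := by
        rw [card_Icc_int, hc_def]; push_cast; ring
      have h2 : SN^2 ≤ c * SQ := by
        rw [← hcard, hSN_def, hSQ_def]
        push_cast
        exact hcs
      rw [div_pow, div_le_div_iff₀ (by positivity) hci]
      nlinarith [h2, hci]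
    have hQv : SQ / c ≤ v i := by
      have hupp' : SQ ≤ (∑ k ∈ R, ∑ l ∈ R,
          ((((Finset.Icc (-(m i : ℤ)) (m i : ℤ)).filter
            (fun x : ℤ => x ∈ A ∧ x + (l - k) ∈ A)).card : ℝ))) + (R.card : ℝ) * C := by
        rw [hSQ_def]
        exact_mod_cast hupp i
      have hvrw : v i = ((∑ k ∈ R, ∑ l ∈ R,
          ((((Finset.Icc (-(m i : ℤ)) (m i : ℤ)).filter
            (fun x : ℤ => x ∈ A ∧ x + (l - k) ∈ A)).card : ℝ))) + (R.card : ℝ) * C) / c := by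
        simp only [hv_def, hc_def]
        rw [add_div]
        simp only [Finset.sum_div]
      rw [hvrw]
      gcongr
    have hmax : max (u i) 0 ≤ SN / c := max_le huL hL0
    calc (max (u i) 0)^2 ≤ (SN/c)^2 := pow_le_pow_left₀ (le_max_right _ _) hmax 2
      _ ≤ SQ / c := hCS
      _ ≤ v i := hQv
  -- pass to the limit
  have hlim : ((R.card : ℝ) * δ)^2 ≤ ∑ k ∈ R, ∑ l ∈ R, η (l - k) := by
    have hl : Tendsto (fun i => (max (u i) 0)^2) atTop
        (nhds ((max ((R.card : ℝ) * δ) 0)^2)) := (hu.max tendsto_const_nhds).pow 2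
    have h := le_of_tendsto_of_tendsto' hl hv hkey
    rwa [max_eq_left (mul_nonneg (Nat.cast_nonneg _) hδ0)] at h
  -- bound the double sum
  have hbound : ∑ k ∈ R, ∑ l ∈ R, η (l - k)
      ≤ (R.card : ℝ) * δ + ((R.card : ℝ) * (R.card : ℝ) - (R.card : ℝ)) * ((1 - ε) * δ^2) := by
    have hper : ∀ k ∈ R, ∑ l ∈ R, η (l - k) ≤ δ + ((R.card : ℝ) - 1) * ((1 - ε) * δ^2) := by
      intro k hk
      rw [← Finset.sum_erase_add R _ hk]
      have h1 : ∑ l ∈ R.erase k, η (l - k) ≤ ((R.card : ℝ) - 1) * ((1 - ε) * δ^2) := by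
        have h2 : ∑ l ∈ R.erase k, η (l - k) ≤ (R.erase k).card • ((1 - ε) * δ^2) :=
          Finset.sum_le_card_nsmul _ _ _ fun l hl =>
            hR l (Finset.mem_of_mem_erase hl) k hk (Finset.ne_of_mem_erase hl)
        rw [Finset.card_erase_of_mem hk, nsmul_eq_mul, Nat.cast_sub hrpos, Nat.cast_one] at h2
        exact h2
      have h3 : η (k - k) = δ := by rw [sub_self, hη0]
      rw [h3]
      linarith [h1]
    calc ∑ k ∈ R, ∑ l ∈ R, η (l - k)
        ≤ ∑ _k ∈ R, (δ + ((R.card : ℝ) - 1) * ((1 - ε) * δ^2)) := Finset.sum_le_sum hper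
      _ = (R.card : ℝ) * (δ + ((R.card : ℝ) - 1) * ((1 - ε) * δ^2)) := by
          rw [Finset.sum_const, nsmul_eq_mul]
      _ = (R.card : ℝ) * δ + ((R.card : ℝ) * (R.card : ℝ) - (R.card : ℝ)) * ((1 - ε) * δ^2) := by
          ring
  have hfin : ((R.card : ℝ) * δ)^2 ≤ (R.card : ℝ) * δ
      + ((R.card : ℝ) * (R.card : ℝ) - (R.card : ℝ)) * ((1 - ε) * δ^2) := hlim.trans hbound
  rw [le_div_iff₀ (mul_pos hδpos hε0)]
  nlinarith [hfin, mul_pos (lt_of_lt_of_le one_pos hr1) hδpos, hδpos, hε0, hr1, hε1]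
end

section
/- Let p ∈ [1,∞) and let w = (w_n)_{n≥1} be a bounded sequence of positive reals. If x ∈ ℓ^p(ℤ₊) and A ⊆ ℤ₊ is a set such that ‖B_w^n x − e_0‖_p ≤ 1/2 for all n ∈ A, then for every n ∈ A one has Σ_{m∈A, m>n} 1/(w_1⋯w_{m-n})^p ≤ 1, where B_w is the unilateral backward weighted shift. -/
open Filter Topology
open scoped Classical ENNReal

theorem stmt4 (p : ℝ) (hp : 1 ≤ p)
    (w : ℕ → ℝ) (hw : ∀ n, 0 < w n) (C : ℝ) (hC : ∀ n, w n ≤ C)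
    (x : ℕ → ℝ) (hx : Summable fun k : ℕ => |x k| ^ p)
    (A : Set ℕ)
    (hA : ∀ n ∈ A,
      (∑' k : ℕ, ENNReal.ofReal
          (|(fun (y : ℕ → ℝ) (m : ℕ) => w (m+1) * y (m+1))^[n] x k
              - (if k = 0 then (1:ℝ) else 0)| ^ p))
        ≤ ENNReal.ofReal ((1/2 : ℝ) ^ p)) :
    ∀ n ∈ A, ∑' m : {m : ℕ | m ∈ A ∧ n < m},
        ENNReal.ofReal (1 / (∏ i ∈ Finset.Icc 1 ((m : ℕ) - n), w i) ^ p) ≤ 1 := by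
  have hp0 : (0:ℝ) < p := lt_of_lt_of_le one_pos hp
  set S : (ℕ → ℝ) → ℕ → ℝ := fun y m => w (m+1) * y (m+1) with hSdef
  -- iterate formula
  have iter : ∀ (N : ℕ) (y : ℕ → ℝ) (k : ℕ),
      S^[N] y k = (∏ j ∈ Finset.range N, w (k+j+1)) * y (k+N) := by
    intro N
    induction N with
    | zero => intro y k; simp
    | succ N ih =>
      intro y k
      rw [Function.iterate_succ_apply, ih, Finset.prod_range_succ]
      simp only [hSdef]
      rw [← Nat.add_assoc]
      exact (mul_assoc _ _ _).symm
  set P : ℕ → ℝ := fun k => ∏ j ∈ Finset.range k, w (j+1) with hPdef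
  have hPpos : ∀ k, 0 < P k := fun k => Finset.prod_pos fun i _ => hw _
  have hIcc : ∀ k : ℕ, (∏ i ∈ Finset.Icc 1 k, w i) = P k := by
    intro k
    induction k with
    | zero => simp [hPdef]
    | succ k ih =>
      rw [Finset.prod_Icc_succ_top (Nat.le_add_left 1 k), ih]
      simp only [hPdef]
      rw [Finset.prod_range_succ]
  have h0 : ∀ m ∈ A, 1/2 ≤ |P m * x m| := by
    intro m hm
    have h2 : ENNReal.ofReal (|S^[m] x 0 - (if (0:ℕ) = 0 then (1:ℝ) else 0)| ^ p)
        ≤ ENNReal.ofReal ((1/2 : ℝ) ^ p) :=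
      le_trans (ENNReal.le_tsum 0) (hA m hm)
    rw [iter] at h2
    simp only [if_pos rfl, Nat.zero_add] at h2
    have h3 : |P m * x m - 1| ^ p ≤ (1/2 : ℝ) ^ p := by
      rw [ENNReal.ofReal_le_ofReal_iff (by positivity)] at h2
      simpa [hPdef] using h2
    have h4 : |P m * x m - 1| ≤ 1/2 :=
      (Real.rpow_le_rpow_iff (abs_nonneg _) (by norm_num) hp0).mp h3
    have h5 := abs_sub_abs_le_abs_sub (1 : ℝ) (P m * x m)
    rw [abs_sub_comm] at h5
    simp only [abs_one] at h5
    linarith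
  intro n hn
  have hc0 : ENNReal.ofReal ((1/2 : ℝ) ^ p) ≠ 0 :=
    (ENNReal.ofReal_pos.mpr (by positivity)).ne'
  rw [← ENNReal.mul_le_mul_iff_right hc0 ENNReal.ofReal_ne_top, mul_one]
  have hinj : Function.Injective
      (fun m : {m : ℕ | m ∈ A ∧ n < m} => (m : ℕ) - n) := by
    rintro ⟨a, _, ha⟩ ⟨b, _, hb⟩ h
    simp only [Subtype.mk.injEq]
    simp only at h
    omega
  calc ENNReal.ofReal ((1/2 : ℝ) ^ p) * ∑' m : {m : ℕ | m ∈ A ∧ n < m},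
        ENNReal.ofReal (1 / (∏ i ∈ Finset.Icc 1 ((m : ℕ) - n), w i) ^ p)
      = ∑' m : {m : ℕ | m ∈ A ∧ n < m}, ENNReal.ofReal ((1/2 : ℝ) ^ p)
          * ENNReal.ofReal (1 / (∏ i ∈ Finset.Icc 1 ((m : ℕ) - n), w i) ^ p) :=
        ENNReal.tsum_mul_left.symm
    _ ≤ ∑' m : {m : ℕ | m ∈ A ∧ n < m},
          ENNReal.ofReal (|S^[n] x ((m : ℕ) - n)
            - (if (m : ℕ) - n = 0 then (1:ℝ) else 0)| ^ p) := by
        apply ENNReal.tsum_le_tsum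
        rintro ⟨m, hmA, hmn⟩
        simp only
        have hk0 : m - n ≠ 0 := by omega
        rw [if_neg hk0, sub_zero, iter, hIcc]
        have hkn : m - n + n = m := by omega
        rw [hkn]
        set Q : ℝ := ∏ j ∈ Finset.range n, w (m - n + j + 1) with hQdef
        have hsplit : P m = P (m - n) * Q := by
          conv_lhs => rw [← hkn]
          simp only [hPdef, hQdef]
          rw [Finset.prod_range_add]
        have h6 : (1/2 : ℝ) / P (m - n) ≤ |Q * x m| := by
          rw [div_le_iff₀ (hPpos _)]
          have := h0 m hmA
          rw [hsplit, mul_assoc, abs_mul, abs_of_pos (hPpos (m - n))] at this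
          linarith
        rw [← ENNReal.ofReal_mul (Real.rpow_nonneg (by norm_num) p)]
        apply ENNReal.ofReal_le_ofReal
        have h7 : (1/2 : ℝ) ^ p * (1 / P (m - n) ^ p) = ((1/2) / P (m - n)) ^ p := by
          rw [Real.div_rpow (by norm_num) (hPpos _).le]
          ring
        rw [h7]
        exact Real.rpow_le_rpow (div_nonneg (by norm_num) (hPpos _).le) h6 hp0.le
    _ ≤ ∑' k : ℕ, ENNReal.ofReal
          (|S^[n] x k - (if k = 0 then (1:ℝ) else 0)| ^ p) :=
        ENNReal.tsum_comp_le_tsum_of_injective hinj _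
    _ ≤ ENNReal.ofReal ((1/2 : ℝ) ^ p) := hA n hn
end

section
/- Let p ∈ [1,∞) and let w = (w_n)_{n≥1} be a bounded sequence of positive reals. If the unilateral weighted backward shift B_w is U-frequently hypercyclic on ℓ^p(ℤ₊), then Σ_{n≥1} 1/(w_1⋯w_n)^p < +∞. -/
open Filter Topology
open scoped Classical ENNReal

namespace Stmt5Aux

/-- Ultrafilter limit of a real sequence (defaults to 0 if no limit). -/
noncomputable def ulim (𝒰 : Ultrafilter ℕ) (s : ℕ → ℝ) : ℝ :=
  if h : ∃ a, Tendsto s (𝒰 : Filter ℕ) (𝓝 a) then h.choose else 0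

theorem ulim_tendsto {𝒰 : Ultrafilter ℕ} {s : ℕ → ℝ} {M : ℝ}
    (hs : ∀ k, |s k| ≤ M) : Tendsto s (𝒰 : Filter ℕ) (𝓝 (ulim 𝒰 s)) := by
  have hmem : (𝒰 : Filter ℕ).map s ≤ Filter.principal (Set.Icc (-M) M) := by
    refine Filter.le_principal_iff.mpr (Filter.mem_map.2 ?_)
    have : s ⁻¹' Set.Icc (-M) M = Set.univ := by
      ext k
      simpa [Set.mem_Icc] using abs_le.mp (hs k)
    rw [this]
    exact Filter.univ_mem
  obtain ⟨a, -, ha⟩ := isCompact_Icc.ultrafilter_le_nhds (𝒰.map s)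
    (by simpa [Ultrafilter.coe_map] using hmem)
  have h : ∃ a, Tendsto s (𝒰 : Filter ℕ) (𝓝 a) :=
    ⟨a, by simpa [Filter.Tendsto, Ultrafilter.coe_map] using ha⟩
  rw [ulim, dif_pos h]
  exact h.choose_spec

section Avg

variable (N : ℕ → ℕ)

/-- Cesàro average along the window `[0, N k]`. -/
noncomputable def avg (x : ℕ → ℝ) (k : ℕ) : ℝ :=
  ((N k : ℝ) + 1)⁻¹ * ∑ n ∈ Finset.range (N k + 1), x n

theorem avg_abs_le {x : ℕ → ℝ} {M : ℝ} (hx : ∀ n, |x n| ≤ M) (k : ℕ) :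
    |avg N x k| ≤ M := by
  have hpos : (0:ℝ) < (N k : ℝ) + 1 := by positivity
  have h1 : |∑ n ∈ Finset.range (N k + 1), x n| ≤ ((N k : ℝ) + 1) * M := by
    calc |∑ n ∈ Finset.range (N k + 1), x n| ≤ ∑ n ∈ Finset.range (N k + 1), |x n| :=
          Finset.abs_sum_le_sum_abs _ _
      _ ≤ ∑ _n ∈ Finset.range (N k + 1), M := Finset.sum_le_sum fun n _ => hx n
      _ = ((N k : ℝ) + 1) * M := by
          simp [Finset.sum_const, Finset.card_range]
  have : |avg N x k| = ((N k : ℝ) + 1)⁻¹ * |∑ n ∈ Finset.range (N k + 1), x n| := by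
    rw [avg, abs_mul, abs_of_pos (by positivity)]
  rw [this]
  calc ((N k : ℝ) + 1)⁻¹ * |∑ n ∈ Finset.range (N k + 1), x n|
      ≤ ((N k : ℝ) + 1)⁻¹ * (((N k : ℝ) + 1) * M) := by
        apply mul_le_mul_of_nonneg_left h1 (by positivity)
    _ = M := by field_simp

variable (𝒰 : Ultrafilter ℕ)

/-- The Banach-limit-like functional. -/
noncomputable def LL (x : ℕ → ℝ) : ℝ := ulim 𝒰 (avg N x)

theorem LL_tendsto {x : ℕ → ℝ} {M : ℝ} (hx : ∀ n, |x n| ≤ M) :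
    Tendsto (avg N x) (𝒰 : Filter ℕ) (𝓝 (LL N 𝒰 x)) :=
  ulim_tendsto (avg_abs_le N hx)

/-- `LL` is bounded-linear on bounded sequences: additivity. -/
theorem LL_add {x y : ℕ → ℝ} {Mx My : ℝ} (hx : ∀ n, |x n| ≤ Mx) (hy : ∀ n, |y n| ≤ My) :
    LL N 𝒰 (fun n => x n + y n) = LL N 𝒰 x + LL N 𝒰 y := by
  have h1 : Tendsto (avg N fun n => x n + y n) (𝒰 : Filter ℕ) (𝓝 (LL N 𝒰 x + LL N 𝒰 y)) := by
    have : avg N (fun n => x n + y n) = fun k => avg N x k + avg N y k := by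
      funext k
      simp [avg, Finset.sum_add_distrib, mul_add]
    rw [this]
    exact ((LL_tendsto N 𝒰 hx).add (LL_tendsto N 𝒰 hy))
  have h2 : Tendsto (avg N fun n => x n + y n) (𝒰 : Filter ℕ)
      (𝓝 (LL N 𝒰 fun n => x n + y n)) :=
    LL_tendsto N 𝒰 (x := fun n => x n + y n) (M := Mx + My)
      (fun n => (abs_add_le _ _).trans (add_le_add (hx n) (hy n)))
  exact tendsto_nhds_unique h2 h1

theorem LL_smul {x : ℕ → ℝ} {M : ℝ} (c : ℝ) (hx : ∀ n, |x n| ≤ M) :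
    LL N 𝒰 (fun n => c * x n) = c * LL N 𝒰 x := by
  have h1 : Tendsto (avg N fun n => c * x n) (𝒰 : Filter ℕ) (𝓝 (c * LL N 𝒰 x)) := by
    have : avg N (fun n => c * x n) = fun k => c * avg N x k := by
      funext k
      simp only [avg, Finset.mul_sum]
      congr 1
      funext n
      ring
    rw [this]
    exact (LL_tendsto N 𝒰 hx).const_mul c
  have h2 : Tendsto (avg N fun n => c * x n) (𝒰 : Filter ℕ)
      (𝓝 (LL N 𝒰 fun n => c * x n)) :=
    LL_tendsto N 𝒰 (x := fun n => c * x n) (M := |c| * M)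
      (fun n => by rw [abs_mul]; exact mul_le_mul_of_nonneg_left (hx n) (abs_nonneg c))
  exact tendsto_nhds_unique h2 h1

theorem LL_mono {x y : ℕ → ℝ} {Mx My : ℝ} (hx : ∀ n, |x n| ≤ Mx) (hy : ∀ n, |y n| ≤ My)
    (hxy : ∀ n, x n ≤ y n) : LL N 𝒰 x ≤ LL N 𝒰 y := by
  refine le_of_tendsto_of_tendsto' (LL_tendsto N 𝒰 hx) (LL_tendsto N 𝒰 hy) fun k => ?_
  have hpos : (0:ℝ) ≤ ((N k : ℝ) + 1)⁻¹ := by positivity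
  exact mul_le_mul_of_nonneg_left (Finset.sum_le_sum fun n _ => hxy n) hpos

theorem LL_const (c : ℝ) : LL N 𝒰 (fun _ => c) = c := by
  have h2 : Tendsto (avg N fun _ => c) (𝒰 : Filter ℕ) (𝓝 (LL N 𝒰 fun _ => c)) :=
    LL_tendsto N 𝒰 (x := fun _ => c) (M := |c|) (fun n => le_refl _)
  have h1 : Tendsto (avg N fun _ => c) (𝒰 : Filter ℕ) (𝓝 c) := by
    have : avg N (fun _ => c) = fun _ => c := by
      funext k
      have hpos : ((N k : ℝ) + 1) ≠ 0 := by positivity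
      simp [avg, Finset.sum_const, Finset.card_range]
      field_simp
    rw [this]
    exact tendsto_const_nhds
  exact tendsto_nhds_unique h2 h1

end Avg


section Shift

variable (N : ℕ → ℕ) (𝒰 : Ultrafilter ℕ)

theorem LL_shift (hN : StrictMono N) (h𝒰 : (𝒰 : Filter ℕ) ≤ atTop)
    {x : ℕ → ℝ} {M : ℝ} (hx : ∀ n, |x n| ≤ M) :
    LL N 𝒰 (fun n => x (n + 1)) = LL N 𝒰 x := by
  -- avg of shifted = avg + error, error → 0
  have key : ∀ k, avg N (fun n => x (n + 1)) k
      = avg N x k + ((N k : ℝ) + 1)⁻¹ * (x (N k + 1) - x 0) := by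
    intro k
    have hsum : ∑ n ∈ Finset.range (N k + 1), x (n + 1)
        = (∑ n ∈ Finset.range (N k + 1), x n) + (x (N k + 1) - x 0) := by
      have h1 : ∑ n ∈ Finset.range (N k + 1 + 1), x n
          = (∑ n ∈ Finset.range (N k + 1), x (n + 1)) + x 0 := Finset.sum_range_succ' x (N k + 1)
      have h2 : ∑ n ∈ Finset.range (N k + 1 + 1), x n
          = (∑ n ∈ Finset.range (N k + 1), x n) + x (N k + 1) := Finset.sum_range_succ x (N k + 1)
      have := h1.symm.trans h2
      linarith
    simp only [avg, hsum, mul_add]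
  have herr : Tendsto (fun k => ((N k : ℝ) + 1)⁻¹ * (x (N k + 1) - x 0)) atTop (𝓝 0) := by
    have hb : ∀ k, |((N k : ℝ) + 1)⁻¹ * (x (N k + 1) - x 0)| ≤ (2 * M) * ((k : ℝ) + 1)⁻¹ := by
      intro k
      have hNk : (k : ℝ) ≤ (N k : ℝ) := by exact_mod_cast hN.le_apply
      have h1 : ((N k : ℝ) + 1)⁻¹ ≤ ((k : ℝ) + 1)⁻¹ := by
        apply inv_anti₀ (by positivity) (by linarith)
      have h2 : |x (N k + 1) - x 0| ≤ 2 * M :=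
        (abs_sub _ _).trans (by have := hx (N k + 1); have := hx 0; linarith)
      rw [abs_mul, abs_of_pos (show (0:ℝ) < ((N k : ℝ) + 1)⁻¹ by positivity)]
      calc ((N k : ℝ) + 1)⁻¹ * |x (N k + 1) - x 0| ≤ ((k : ℝ) + 1)⁻¹ * (2 * M) := by
            apply mul_le_mul h1 h2 (abs_nonneg _) (by positivity)
        _ = (2 * M) * ((k : ℝ) + 1)⁻¹ := by ring
    have hz : Tendsto (fun k : ℕ => (2 * M) * ((k : ℝ) + 1)⁻¹) atTop (𝓝 0) := by
      have : Tendsto (fun k : ℕ => ((k : ℝ) + 1)⁻¹) atTop (𝓝 0) := tendsto_one_div_add_atTop_nhds_zero_nat.congr (by intro k; rw [one_div])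
      simpa using this.const_mul (2 * M)
    exact squeeze_zero_norm hb hz
  have herrU : Tendsto (fun k => ((N k : ℝ) + 1)⁻¹ * (x (N k + 1) - x 0)) (𝒰 : Filter ℕ) (𝓝 0) :=
    herr.mono_left h𝒰
  have h1 : Tendsto (avg N (fun n => x (n + 1))) (𝒰 : Filter ℕ) (𝓝 (LL N 𝒰 x + 0)) := by
    have := (LL_tendsto N 𝒰 hx).add herrU
    refine this.congr fun k => (key k).symm
  have h2 : Tendsto (avg N (fun n => x (n + 1))) (𝒰 : Filter ℕ)
      (𝓝 (LL N 𝒰 fun n => x (n + 1))) :=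
    LL_tendsto N 𝒰 (x := fun n => x (n + 1)) (M := M) (fun n => hx (n + 1))
  have := tendsto_nhds_unique h2 h1
  simpa using this


theorem LL_shift_add (hN : StrictMono N) (h𝒰 : (𝒰 : Filter ℕ) ≤ atTop)
    {x : ℕ → ℝ} {M : ℝ} (hx : ∀ n, |x n| ≤ M) (b : ℕ) :
    LL N 𝒰 (fun n => x (n + b)) = LL N 𝒰 x := by
  induction b with
  | zero => simp
  | succ b ih =>
      have h1 : LL N 𝒰 (fun n => x (n + (b + 1))) = LL N 𝒰 (fun n => x (n + b)) := by
        have := LL_shift N 𝒰 hN h𝒰 (x := fun n => x (n + b)) (M := M) (fun n => hx (n + b))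
        convert this using 2
        funext n
        congr 1
        omega
      rw [h1, ih]

end Shift


section FinSum

variable (N : ℕ → ℕ) (𝒰 : Ultrafilter ℕ)

theorem LL_finsum {ι : Type*} (s : Finset ι) (c : ι → ℝ) (f : ι → ℕ → ℝ) (B : ι → ℝ)
    (hf : ∀ i ∈ s, ∀ n, |f i n| ≤ B i) :
    LL N 𝒰 (fun n => ∑ i ∈ s, c i * f i n) = ∑ i ∈ s, c i * LL N 𝒰 (f i) := by
  classical
  induction s using Finset.induction_on with
  | empty => simp [LL_const]
  | @insert j t hj ih =>
      have hbt : ∀ n, |∑ i ∈ t, c i * f i n| ≤ ∑ i ∈ t, |c i| * B i := by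
        intro n
        calc |∑ i ∈ t, c i * f i n| ≤ ∑ i ∈ t, |c i * f i n| := Finset.abs_sum_le_sum_abs _ _
          _ ≤ ∑ i ∈ t, |c i| * B i := by
              refine Finset.sum_le_sum fun i hi => ?_
              rw [abs_mul]
              exact mul_le_mul_of_nonneg_left (hf i (Finset.mem_insert_of_mem hi) n) (abs_nonneg _)
      have hfj : ∀ n, |c j * f j n| ≤ |c j| * B j := by
        intro n
        rw [abs_mul]
        exact mul_le_mul_of_nonneg_left (hf j (Finset.mem_insert_self j t) n) (abs_nonneg _)
      have step1 : LL N 𝒰 (fun n => ∑ i ∈ insert j t, c i * f i n)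
          = LL N 𝒰 (fun n => c j * f j n) + LL N 𝒰 (fun n => ∑ i ∈ t, c i * f i n) := by
        have : (fun n => ∑ i ∈ insert j t, c i * f i n)
            = fun n => c j * f j n + ∑ i ∈ t, c i * f i n := by
          funext n
          rw [Finset.sum_insert hj]
        rw [this]
        exact LL_add N 𝒰 hfj hbt
      rw [step1, LL_smul N 𝒰 (c j) (hf j (Finset.mem_insert_self j t)),
        ih (fun i hi => hf i (Finset.mem_insert_of_mem hi)), Finset.sum_insert hj]

theorem LL_nonneg {x : ℕ → ℝ} {M : ℝ} (hx : ∀ n, |x n| ≤ M) (hx0 : ∀ n, 0 ≤ x n) :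
    0 ≤ LL N 𝒰 x := by
  have := LL_mono N 𝒰 (x := fun _ => (0:ℝ)) (y := x) (Mx := 0) (My := M)
    (fun n => by simp) hx (fun n => hx0 n)
  simpa [LL_const] using this

end FinSum

section Core

/-- The main combinatorial lemma: a set of positive upper density whose difference
sets (from each base point) carry summable `a`-budgets forces `a` to be summable,
provided `a` has bounded downward ratios. -/
theorem core (E : Set ℕ) (a : ℕ → ℝ) (ha : ∀ d, 0 ≤ a d) (C₂ : ℝ) (hC₂ : 1 ≤ C₂)
    (hLip : ∀ d, a d ≤ C₂ * a (d + 1))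
    (hbudget : ∀ m ∈ E, ∀ F : Finset ℕ, (∀ n ∈ F, n ∈ E ∧ m < n) → ∑ n ∈ F, a (n - m) ≤ 1)
    (hdens : 0 < upperDensity E) :
    ∃ B : ℝ, ∀ D : ℕ, ∑ d ∈ Finset.range D, a (d + 1) ≤ B := by
  classical
  -- Step A : extract a subsequence of scales realizing the upper density
  set β : ℝ := upperDensity E / 2 with hβdef
  have hβpos : 0 < β := by
    rw [hβdef]; linarith
  have hfreq : ∃ᶠ n in atTop,
      β < (((Finset.range (n+1)).filter (· ∈ E)).card : ℝ) / (n+1) := by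
    have hbdd : Filter.IsCoboundedUnder (· ≤ ·) atTop
        (fun n : ℕ => (((Finset.range (n+1)).filter (· ∈ E)).card : ℝ) / (n+1)) := by
      apply Filter.IsBounded.isCobounded_le (α := ℝ)
      refine ⟨0, Filter.eventually_map.mpr (Filter.Eventually.of_forall fun n => ?_)⟩
      exact div_nonneg (Nat.cast_nonneg _) (by positivity)
    exact Filter.frequently_lt_of_lt_limsup hbdd (by rw [hβdef]; rw [upperDensity] at hdens ⊢; linarith)
  obtain ⟨N, hNmono, hN⟩ := Filter.extraction_of_frequently_atTop hfreq
  set 𝒰 : Ultrafilter ℕ := Ultrafilter.of (atTop : Filter ℕ) with h𝒰def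
  have h𝒰 : (𝒰 : Filter ℕ) ≤ atTop := Ultrafilter.of_le _
  -- the indicator function of E
  set e : ℕ → ℝ := fun n => if n ∈ E then 1 else 0 with hedef
  have he01 : ∀ n, |e n| ≤ 1 := by
    intro n; rw [hedef]; dsimp only; split <;> simp
  have he0 : ∀ n, 0 ≤ e n := by
    intro n; rw [hedef]; dsimp only; split <;> simp
  have he1 : ∀ n, e n ≤ 1 := by
    intro n; rw [hedef]; dsimp only; split <;> simp
  have hee : ∀ n, e n * e n = e n := by
    intro n; rw [hedef]; dsimp only; split <;> simp
  set δ : ℝ := LL N 𝒰 e with hδdef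
  have hδβ : β ≤ δ := by
    have hav : ∀ k, β ≤ avg N e k := by
      intro k
      have hsum : ∑ n ∈ Finset.range (N k + 1), e n
          = (((Finset.range (N k + 1)).filter (· ∈ E)).card : ℝ) := by
        rw [hedef]
        simp [Finset.sum_boole]
      have hk := hN k
      rw [avg, hsum]
      rw [div_eq_inv_mul] at hk
      exact le_of_lt hk
    exact ge_of_tendsto (LL_tendsto N 𝒰 he01) (Filter.Eventually.of_forall hav)
  have hδ1 : δ ≤ 1 := by
    have := LL_mono N 𝒰 (Mx := 1) (My := 1) he01 (fun n => by simp : ∀ n, |(1:ℝ)| ≤ 1) he1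
    rwa [LL_const] at this
  have hδpos : 0 < δ := lt_of_lt_of_le hβpos hδβ
  set c₀ : ℝ := δ^2/2 with hc₀def
  have hc₀pos : 0 < c₀ := by rw [hc₀def]; positivity
  set ρ : ℕ → ℝ := fun d => LL N 𝒰 (fun n => e n * e (n + d)) with hρdef
  have heeb : ∀ (d : ℕ) (n : ℕ), |e n * e (n + d)| ≤ 1 := by
    intro d n
    rw [abs_mul]
    calc |e n| * |e (n+d)| ≤ 1 * 1 := mul_le_mul (he01 n) (he01 (n+d)) (abs_nonneg _) zero_le_one
      _ = 1 := one_mul 1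
  have hρpair : ∀ b b' : ℕ, b ≤ b' →
      LL N 𝒰 (fun n => e (n + b) * e (n + b')) = ρ (b' - b) := by
    intro b b' hbb
    have h1 := LL_shift_add N 𝒰 hNmono h𝒰 (x := fun n => e n * e (n + (b' - b))) (M := 1)
      (heeb (b' - b)) b
    rw [hρdef]
    dsimp only at h1 ⊢
    rw [← h1]
    congr 1
    funext n
    congr 2
    omega
  -- Step B : Khintchine-type syndeticity of popular differences
  have hsynd : ∃ G : ℕ, ∀ t : ℕ, ∃ d : ℕ, t < d ∧ d ≤ t + G ∧ c₀ ≤ ρ d := by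
    by_contra hcon
    push_neg at hcon
    -- hcon : ∀ G, ∃ t, ∀ d, t < d → d ≤ t + G → ρ d < c₀
    choose t ht using hcon
    set b : ℕ → ℕ := fun j => Nat.rec 0 (fun _ bj => t (bj + 1) + 1 + bj) j with hbdef
    have hbsucc : ∀ j, b (j + 1) = t (b j + 1) + 1 + b j := fun j => rfl
    have hbstep : ∀ j, b j ≤ b (j + 1) := by
      intro j
      rw [hbsucc]
      omega
    have hbmono : ∀ i j : ℕ, i ≤ j → b i ≤ b j :=
      fun i j hij => (monotone_nat_of_le_succ hbstep) hij
    have hbad : ∀ i j : ℕ, i < j → ρ (b j - b i) < c₀ := by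
      intro i j hij
      obtain ⟨j', rfl⟩ : ∃ j', j = j' + 1 := ⟨j - 1, by omega⟩
      have hle : b i ≤ b j' := hbmono i j' (by omega)
      have harith : b (j' + 1) - b i = t (b j' + 1) + 1 + (b j' - b i) := by
        rw [hbsucc]
        omega
      rw [harith]
      apply ht (b j' + 1)
      · omega
      · omega
    set K : ℕ := Nat.floor (2 / δ) + 1 with hKdef
    have hK2 : 2 < (K : ℝ) * δ := by
      have h1 : 2 / δ < (K : ℝ) := by
        rw [hKdef]
        push_cast
        exact Nat.lt_floor_add_one _
      calc (2:ℝ) = 2 / δ * δ := by field_simp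
        _ < (K:ℝ) * δ := by
            apply mul_lt_mul_of_pos_right h1 hδpos
    set h' : ℕ → ℝ := fun n => ∑ i ∈ Finset.range K, e (n + b i) with hh'def
    have hh'b : ∀ n, |h' n| ≤ (K : ℝ) := by
      intro n
      rw [hh'def]
      dsimp only
      calc |∑ i ∈ Finset.range K, e (n + b i)| ≤ ∑ i ∈ Finset.range K, |e (n + b i)| :=
            Finset.abs_sum_le_sum_abs _ _
        _ ≤ ∑ _i ∈ Finset.range K, (1:ℝ) := Finset.sum_le_sum fun i _ => he01 _
        _ = (K:ℝ) := by simp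
    have hLLh' : LL N 𝒰 h' = (K : ℝ) * δ := by
      have h1 : LL N 𝒰 (fun n => ∑ i ∈ Finset.range K, (1:ℝ) * e (n + b i))
          = ∑ i ∈ Finset.range K, (1:ℝ) * LL N 𝒰 (fun n => e (n + b i)) :=
        LL_finsum N 𝒰 (Finset.range K) (fun _ => 1) (fun i n => e (n + b i)) (fun _ => 1)
          (fun i _ n => he01 _)
      have h2 : ∀ i, LL N 𝒰 (fun n => e (n + b i)) = δ := by
        intro i
        rw [hδdef]
        exact LL_shift_add N 𝒰 hNmono h𝒰 he01 (b i)
      rw [hh'def]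
      simp only [one_mul] at h1
      rw [h1]
      rw [Finset.sum_congr rfl (fun i _ => by rw [h2 i])]
      simp
    -- pair values
    have hpairval : ∀ i j : ℕ, i ≠ j →
        LL N 𝒰 (fun n => e (n + b i) * e (n + b j)) < c₀ := by
      intro i j hij
      rcases Nat.lt_or_ge i j with h | h
      · rw [hρpair (b i) (b j) (hbmono i j (by omega))]
        exact hbad i j h
      · have hji : j < i := by omega
        have hcomm : (fun n => e (n + b i) * e (n + b j))
            = fun n => e (n + b j) * e (n + b i) := by
          funext n; ring
        rw [hcomm, hρpair (b j) (b i) (hbmono j i (by omega))]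
        exact hbad j i hji
    have hdiagval : ∀ i : ℕ, LL N 𝒰 (fun n => e (n + b i) * e (n + b i)) = δ := by
      intro i
      have : (fun n => e (n + b i) * e (n + b i)) = fun n => e (n + b i) := by
        funext n; exact hee _
      rw [this, hδdef]
      exact LL_shift_add N 𝒰 hNmono h𝒰 he01 (b i)
    -- LL of h'^2 as a double sum
    have hsq : LL N 𝒰 (fun n => h' n * h' n)
        = ∑ i ∈ Finset.range K, ∑ j ∈ Finset.range K,
            LL N 𝒰 (fun n => e (n + b i) * e (n + b j)) := by
      have houter : (fun n => h' n * h' n)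
          = fun n => ∑ i ∈ Finset.range K, (1:ℝ) * (e (n + b i) * h' n) := by
        funext n
        rw [hh'def]
        dsimp only
        rw [Finset.sum_mul]
        simp
      have h1 : LL N 𝒰 (fun n => ∑ i ∈ Finset.range K, (1:ℝ) * (e (n + b i) * h' n))
          = ∑ i ∈ Finset.range K, (1:ℝ) * LL N 𝒰 (fun n => e (n + b i) * h' n) := by
        apply LL_finsum N 𝒰 (Finset.range K) (fun _ => 1) _ (fun _ => (K:ℝ))
        intro i _ n
        rw [abs_mul]
        calc |e (n + b i)| * |h' n| ≤ 1 * (K:ℝ) :=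
              mul_le_mul (he01 _) (hh'b n) (abs_nonneg _) zero_le_one
          _ = (K:ℝ) := one_mul _
      have h2 : ∀ i, LL N 𝒰 (fun n => e (n + b i) * h' n)
          = ∑ j ∈ Finset.range K, (1:ℝ) * LL N 𝒰 (fun n => e (n + b i) * e (n + b j)) := by
        intro i
        have hinner : (fun n => e (n + b i) * h' n)
            = fun n => ∑ j ∈ Finset.range K, (1:ℝ) * (e (n + b i) * e (n + b j)) := by
          funext n
          rw [hh'def]
          dsimp only
          rw [Finset.mul_sum]
          simp
        rw [hinner]
        apply LL_finsum N 𝒰 (Finset.range K) (fun _ => 1) _ (fun _ => (1:ℝ))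
        intro j _ n
        rw [abs_mul]
        calc |e (n + b i)| * |e (n + b j)| ≤ 1 * 1 :=
              mul_le_mul (he01 _) (he01 _) (abs_nonneg _) zero_le_one
          _ = 1 := one_mul 1
      rw [houter, h1]
      simp only [one_mul]
      exact Finset.sum_congr rfl fun i _ => by
        have := h2 i
        simp only [one_mul] at this
        exact this
    -- upper bound on LL h'^2
    have hub : LL N 𝒰 (fun n => h' n * h' n) ≤ (K:ℝ) * δ + (K:ℝ)^2 * c₀ := by
      rw [hsq]
      have hrow : ∀ i ∈ Finset.range K,
          ∑ j ∈ Finset.range K, LL N 𝒰 (fun n => e (n + b i) * e (n + b j))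
            ≤ δ + (K:ℝ) * c₀ := by
        intro i hi
        have hterm : ∀ j ∈ Finset.range K,
            LL N 𝒰 (fun n => e (n + b i) * e (n + b j))
              ≤ c₀ + (if i = j then δ else 0) := by
          intro j _
          by_cases hij : i = j
          · subst hij
            rw [hdiagval i, if_pos rfl]
            linarith [hc₀pos]
          · rw [if_neg hij]
            have := hpairval i j hij
            linarith
        calc ∑ j ∈ Finset.range K, LL N 𝒰 (fun n => e (n + b i) * e (n + b j))
            ≤ ∑ j ∈ Finset.range K, (c₀ + if i = j then δ else 0) :=
              Finset.sum_le_sum hterm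
          _ = (K:ℝ) * c₀ + δ := by
              rw [Finset.sum_add_distrib, Finset.sum_ite_eq (Finset.range K) i (fun _ => δ)]
              simp [Finset.mem_range.mpr (Finset.mem_range.mp hi), mul_comm]
          _ = δ + (K:ℝ) * c₀ := by ring
      calc ∑ i ∈ Finset.range K, ∑ j ∈ Finset.range K,
            LL N 𝒰 (fun n => e (n + b i) * e (n + b j))
          ≤ ∑ _i ∈ Finset.range K, (δ + (K:ℝ) * c₀) := Finset.sum_le_sum hrow
        _ = (K:ℝ) * (δ + (K:ℝ) * c₀) := by
            rw [Finset.sum_const, Finset.card_range, nsmul_eq_mul]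
        _ = (K:ℝ) * δ + (K:ℝ)^2 * c₀ := by ring
    -- lower bound : Cauchy-Schwarz
    have hlb : ((K:ℝ) * δ)^2 ≤ LL N 𝒰 (fun n => h' n * h' n) := by
      set c : ℝ := (K:ℝ) * δ with hcdef
      have hsq0 : 0 ≤ LL N 𝒰 (fun n => (h' n - c) * (h' n - c)) := by
        apply LL_nonneg N 𝒰 (M := ((K:ℝ) + |c|)^2)
        · intro n
          rw [abs_mul]
          have h1 : |h' n - c| ≤ (K:ℝ) + |c| := (abs_sub _ _).trans (by
            have := hh'b n
            linarith)
          calc |h' n - c| * |h' n - c| ≤ ((K:ℝ) + |c|) * ((K:ℝ) + |c|) := by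
                apply mul_le_mul h1 h1 (abs_nonneg _) (by positivity)
            _ = ((K:ℝ) + |c|)^2 := by ring
        · intro n
          exact mul_self_nonneg _
      have hexp : LL N 𝒰 (fun n => (h' n - c) * (h' n - c))
          = LL N 𝒰 (fun n => h' n * h' n) - c^2 := by
        have heq : (fun n => (h' n - c) * (h' n - c))
            = fun n => h' n * h' n + ((-2*c) * h' n + c^2 * 1) := by
          funext n; ring
        have hb1 : ∀ n, |h' n * h' n| ≤ (K:ℝ)^2 := by
          intro n
          rw [abs_mul]
          calc |h' n| * |h' n| ≤ (K:ℝ) * (K:ℝ) := by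
                apply mul_le_mul (hh'b n) (hh'b n) (abs_nonneg _) (by positivity)
            _ = (K:ℝ)^2 := by ring
        have hb2 : ∀ n, |(-2*c) * h' n + c^2 * 1| ≤ |(-2*c)| * (K:ℝ) + c^2 := by
          intro n
          calc |(-2*c) * h' n + c^2 * 1| ≤ |(-2*c) * h' n| + |c^2 * 1| := abs_add_le _ _
            _ ≤ |(-2*c)| * (K:ℝ) + c^2 := by
                rw [abs_mul]
                gcongr
                · exact hh'b n
                · rw [mul_one, abs_of_nonneg (sq_nonneg c)]
        rw [heq]
        rw [LL_add N 𝒰 hb1 hb2]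
        have h3 : LL N 𝒰 (fun n => (-2*c) * h' n + c^2 * 1)
            = (-2*c) * ((K:ℝ)*δ) + c^2 := by
          have hb4 : ∀ n : ℕ, |c^2 * (1:ℝ)| ≤ c^2 := by
            intro n
            rw [mul_one, abs_of_nonneg (sq_nonneg c)]
          rw [LL_add N 𝒰 (x := fun n : ℕ => (-2*c) * h' n) (y := fun _ : ℕ => c^2 * 1)
            (Mx := |(-2*c)| * (K:ℝ)) (My := c^2)
            (fun n => by rw [abs_mul]; gcongr; exact hh'b n) hb4]
          rw [LL_smul N 𝒰 (-2*c) hh'b, hLLh']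
          have : LL N 𝒰 (fun _ : ℕ => c^2 * 1) = c^2 := by
            rw [mul_one]
            exact LL_const N 𝒰 (c^2)
          rw [this]
        rw [h3, hcdef]
        ring
      rw [hexp] at hsq0
      rw [hcdef] at hsq0 ⊢
      linarith
    -- contradiction
    have hfinal := hlb.trans hub
    rw [hc₀def] at hfinal
    nlinarith [hK2, hδpos, mul_pos (lt_trans zero_lt_two hK2) hδpos]
  obtain ⟨G, hG⟩ := hsynd
  choose σ hσ1 hσ2 hσ3 using hG
  -- Step C : simultaneity bound on sums of a over popular differences
  have hsim : ∀ T₀ : Finset ℕ, (∀ s ∈ T₀, 1 ≤ s ∧ c₀ ≤ ρ s) → ∑ s ∈ T₀, a s ≤ 1 / c₀ := by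
    intro T₀ hT₀
    have hstep1 : c₀ * ∑ s ∈ T₀, a s ≤ ∑ s ∈ T₀, a s * ρ s := by
      rw [Finset.mul_sum]
      refine Finset.sum_le_sum fun s hs => ?_
      rw [mul_comm c₀ (a s)]
      exact mul_le_mul_of_nonneg_left (hT₀ s hs).2 (ha s)
    have hstep2 : ∑ s ∈ T₀, a s * ρ s
        = LL N 𝒰 (fun n => ∑ s ∈ T₀, a s * (e n * e (n + s))) := by
      rw [LL_finsum N 𝒰 T₀ a (fun s n => e n * e (n + s)) (fun _ => 1)
        (fun s _ n => heeb s n)]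
    have hptwise : ∀ n, (∑ s ∈ T₀, a s * (e n * e (n + s))) ≤ e n := by
      intro n
      by_cases hnE : n ∈ E
      · have hen : e n = 1 := by rw [hedef]; simp [hnE]
        have heq : ∑ s ∈ T₀, a s * (e n * e (n + s))
            = ∑ s ∈ T₀.filter (fun s => n + s ∈ E), a s := by
          rw [Finset.sum_filter]
          refine Finset.sum_congr rfl fun s _ => ?_
          by_cases hns : n + s ∈ E
          · have : e (n + s) = 1 := by rw [hedef]; simp [hns]
            simp [hns, hen, this]
          · have : e (n + s) = 0 := by rw [hedef]; simp [hns]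
            simp [hns, hen, this]
        rw [heq, hen]
        -- use the budget at base n
        set F : Finset ℕ := (T₀.filter (fun s => n + s ∈ E)).image (fun s => n + s) with hFdef
        have hinj : Set.InjOn (fun s => n + s) ↑(T₀.filter (fun s => n + s ∈ E)) := by
          intro s1 _ s2 _ h
          have h' : n + s1 = n + s2 := h
          omega
        have hsum : ∑ n' ∈ F, a (n' - n) = ∑ s ∈ T₀.filter (fun s => n + s ∈ E), a s := by
          rw [hFdef, Finset.sum_image hinj]
          refine Finset.sum_congr rfl fun s _ => ?_
          congr 1
          omega
        have hFprop : ∀ n' ∈ F, n' ∈ E ∧ n < n' := by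
          intro n' hn'
          rw [hFdef] at hn'
          obtain ⟨s, hs, rfl⟩ := Finset.mem_image.mp hn'
          have hs1 := (hT₀ s (Finset.mem_filter.mp hs).1).1
          exact ⟨(Finset.mem_filter.mp hs).2, by omega⟩
        have := hbudget n hnE F hFprop
        rw [hsum] at this
        exact this
      · have hen : e n = 0 := by rw [hedef]; simp [hnE]
        rw [hen]
        apply le_of_eq
        refine Finset.sum_eq_zero fun s _ => by ring
    have hbdd : ∀ n, |∑ s ∈ T₀, a s * (e n * e (n + s))| ≤ ∑ s ∈ T₀, a s := by
      intro n
      calc |∑ s ∈ T₀, a s * (e n * e (n + s))| ≤ ∑ s ∈ T₀, |a s * (e n * e (n + s))| :=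
            Finset.abs_sum_le_sum_abs _ _
        _ ≤ ∑ s ∈ T₀, a s := by
            refine Finset.sum_le_sum fun s _ => ?_
            rw [abs_mul, abs_of_nonneg (ha s)]
            calc a s * |e n * e (n + s)| ≤ a s * 1 :=
                  mul_le_mul_of_nonneg_left (heeb s n) (ha s)
              _ = a s := mul_one _
    have hstep3 : LL N 𝒰 (fun n => ∑ s ∈ T₀, a s * (e n * e (n + s))) ≤ δ := by
      rw [hδdef]
      exact LL_mono N 𝒰 hbdd he01 hptwise
    have hchain : c₀ * ∑ s ∈ T₀, a s ≤ 1 := by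
      calc c₀ * ∑ s ∈ T₀, a s ≤ ∑ s ∈ T₀, a s * ρ s := hstep1
        _ = LL N 𝒰 (fun n => ∑ s ∈ T₀, a s * (e n * e (n + s))) := hstep2
        _ ≤ δ := hstep3
        _ ≤ 1 := hδ1
    rw [le_div_iff₀ hc₀pos, mul_comm]
    exact hchain
  -- Step D : Lipschitz iteration
  have hLipIter : ∀ d k : ℕ, a d ≤ C₂ ^ k * a (d + k) := by
    intro d k
    induction k with
    | zero => simp
    | succ k ih =>
        calc a d ≤ C₂ ^ k * a (d + k) := ih
          _ ≤ C₂ ^ k * (C₂ * a (d + k + 1)) := by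
              apply mul_le_mul_of_nonneg_left (hLip (d + k)) (by positivity)
          _ = C₂ ^ (k+1) * a (d + (k+1)) := by
              have harith : d + k + 1 = d + (k + 1) := by omega
              rw [harith, pow_succ]
              ring
  -- Step E : the covering bound
  refine ⟨C₂ ^ G * ((G : ℝ) * (1 / c₀)), fun D => ?_⟩
  have h1 : ∀ t : ℕ, a (t + 1) ≤ C₂ ^ G * a (σ t) := by
    intro t
    have h2 := hLipIter (t + 1) (σ t - (t + 1))
    have harith : (t + 1) + (σ t - (t + 1)) = σ t := by
      have := hσ1 t
      omega
    rw [harith] at h2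
    calc a (t + 1) ≤ C₂ ^ (σ t - (t + 1)) * a (σ t) := h2
      _ ≤ C₂ ^ G * a (σ t) := by
          apply mul_le_mul_of_nonneg_right _ (ha _)
          apply pow_le_pow_right₀ hC₂
          have := hσ2 t
          omega
  have hfiber : ∑ t ∈ Finset.range D, a (σ t)
      ≤ (G : ℝ) * ∑ s ∈ (Finset.range D).image σ, a s := by
    have hmaps : ∀ t ∈ Finset.range D, σ t ∈ (Finset.range D).image σ :=
      fun t ht => Finset.mem_image_of_mem σ ht
    rw [← Finset.sum_fiberwise_of_maps_to hmaps (fun t => a (σ t))]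
    rw [Finset.mul_sum]
    refine Finset.sum_le_sum fun s hs => ?_
    have hcongr : ∑ t ∈ (Finset.range D).filter (fun t => σ t = s), a (σ t)
        = ∑ _t ∈ (Finset.range D).filter (fun t => σ t = s), a s := by
      refine Finset.sum_congr rfl fun t ht => ?_
      rw [(Finset.mem_filter.mp ht).2]
    rw [hcongr, Finset.sum_const, nsmul_eq_mul]
    apply mul_le_mul_of_nonneg_right _ (ha s)
    have hsub : (Finset.range D).filter (fun t => σ t = s) ⊆ Finset.Ico (s - G) s := by
      intro t ht
      have h3 := (Finset.mem_filter.mp ht).2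
      have h4 := hσ1 t
      have h5 := hσ2 t
      rw [Finset.mem_Ico]
      omega
    have hcard : (((Finset.range D).filter (fun t => σ t = s)).card) ≤ G := by
      calc (((Finset.range D).filter (fun t => σ t = s)).card)
          ≤ (Finset.Ico (s - G) s).card := Finset.card_le_card hsub
        _ ≤ G := by
            rw [Nat.card_Ico]
            omega
    exact_mod_cast hcard
  have himg : ∑ s ∈ (Finset.range D).image σ, a s ≤ 1 / c₀ := by
    apply hsim
    intro s hs
    obtain ⟨t, _, rfl⟩ := Finset.mem_image.mp hs
    exact ⟨by have := hσ1 t; omega, hσ3 t⟩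
  have hC₂0 : (0:ℝ) ≤ C₂ ^ G := by positivity
  have hfin1 : ∑ d ∈ Finset.range D, a (d + 1)
      ≤ C₂ ^ G * ∑ d ∈ Finset.range D, a (σ d) := by
    calc ∑ d ∈ Finset.range D, a (d + 1) ≤ ∑ d ∈ Finset.range D, C₂ ^ G * a (σ d) :=
          Finset.sum_le_sum fun d _ => h1 d
      _ = C₂ ^ G * ∑ d ∈ Finset.range D, a (σ d) := (Finset.mul_sum _ _ _).symm
  have hfin2 : C₂ ^ G * ∑ d ∈ Finset.range D, a (σ d)
      ≤ C₂ ^ G * ((G : ℝ) * (1 / c₀)) := by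
    apply mul_le_mul_of_nonneg_left _ hC₂0
    calc ∑ d ∈ Finset.range D, a (σ d)
        ≤ (G : ℝ) * ∑ s ∈ (Finset.range D).image σ, a s := hfiber
      _ ≤ (G : ℝ) * (1 / c₀) := mul_le_mul_of_nonneg_left himg (by positivity)
  exact hfin1.trans hfin2

end Core

end Stmt5Aux

theorem stmt5 (p : ℝ≥0∞) [hp : Fact (1 ≤ p)] (hp' : p ≠ ⊤)
    (w : ℕ → ℝ) (hw : ∀ n, 0 < w n) (C : ℝ) (hC : ∀ n, w n ≤ C)
    (T : lp (fun _ : ℕ => ℝ) p →L[ℝ] lp (fun _ : ℕ => ℝ) p)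
    (hT : ∀ (x : lp (fun _ : ℕ => ℝ) p) (k : ℕ), (T x : ∀ _ : ℕ, ℝ) k = w (k+1) * (x : ∀ _ : ℕ, ℝ) (k+1))
    (hUFHC : ∃ x, uFreqHCVec T x) :
    Summable fun n : ℕ => (1 / ∏ i ∈ Finset.Icc 1 (n+1), w i) ^ p.toReal := by
  classical
  obtain ⟨x, hx⟩ := hUFHC
  have hpne0 : p ≠ 0 := (lt_of_lt_of_le zero_lt_one hp.out).ne'
  have hq : 0 < p.toReal := ENNReal.toReal_pos hpne0 hp'
  set q : ℝ := p.toReal with hqdef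
  set u : ℕ → ℝ := fun n => ∏ i ∈ Finset.Ioc 0 n, w i with hudef
  have hu : ∀ n, 0 < u n := by
    intro n
    rw [hudef]
    exact Finset.prod_pos fun i _ => hw i
  set a : ℕ → ℝ := fun d => (1 / u d) ^ q with hadef
  have ha : ∀ d, 0 ≤ a d := by
    intro d
    rw [hadef]
    have := hu d
    positivity
  have hgoal : (fun n : ℕ => (1 / ∏ i ∈ Finset.Icc 1 (n+1), w i) ^ p.toReal)
      = fun n => a (n+1) := by
    funext n
    have hIcc : Finset.Icc 1 (n+1) = Finset.Ioc 0 (n+1) := Finset.Icc_add_one_left_eq_Ioc 0 (n+1)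
    show (1 / ∏ i ∈ Finset.Icc 1 (n+1), w i) ^ p.toReal = (1 / u (n+1)) ^ q
    simp only [hudef, hqdef, hIcc]
  rw [hgoal]
  -- the orbit formula
  have horbit : ∀ (n : ℕ) (y : lp (fun _ : ℕ => ℝ) p) (k : ℕ),
      ((T ^ n) y : ∀ _ : ℕ, ℝ) k = (∏ i ∈ Finset.Ioc k (k + n), w i) * (y : ∀ _ : ℕ, ℝ) (k + n) := by
    intro n
    induction n with
    | zero =>
        intro y k
        simp [pow_zero, ContinuousLinearMap.one_apply, Finset.Ioc_self]
    | succ n ih =>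
        intro y k
        rw [pow_succ, ContinuousLinearMap.mul_apply, ih (T y) k, hT y (k + n)]
        have h1 : ∏ i ∈ Finset.Ioc k (k + (n+1)), w i
            = (∏ i ∈ Finset.Ioc k (k + n), w i) * w (k + n + 1) := by
          have := Finset.prod_Ioc_succ_top (Nat.le_add_right k n) w
          rw [show k + (n+1) = (k + n) + 1 by omega]
          exact this
        rw [h1]
        rw [show k + (n + 1) = k + n + 1 by omega]
        ring
  -- the ball and its hitting set
  set z₀ : lp (fun _ : ℕ => ℝ) p := lp.single p 0 (2:ℝ) with hz₀def
  have hz₀0 : (z₀ : ∀ _ : ℕ, ℝ) 0 = 2 := by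
    rw [hz₀def]
    exact lp.single_apply_self (E := fun _ : ℕ => ℝ) p 0 (2:ℝ)
  have hz₀ne : ∀ j : ℕ, j ≠ 0 → (z₀ : ∀ _ : ℕ, ℝ) j = 0 := by
    intro j hj
    rw [hz₀def]
    exact lp.single_apply_ne (E := fun _ : ℕ => ℝ) p 0 (2:ℝ) hj
  set E : Set ℕ := {n : ℕ | (T ^ n) x ∈ Metric.ball z₀ 1} with hEdef
  have hdens : 0 < upperDensity E :=
    hx (Metric.ball z₀ 1) Metric.isOpen_ball ⟨z₀, Metric.mem_ball_self one_pos⟩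
  have hballE : ∀ n ∈ E, ‖(T ^ n) x - z₀‖ < 1 := by
    intro n hn
    rw [hEdef] at hn
    simpa [Metric.mem_ball, dist_eq_norm] using hn
  -- coordinate zero lower bound on E
  have hcoord0 : ∀ n ∈ E, 1 ≤ u n * (x : ∀ _ : ℕ, ℝ) n := by
    intro n hn
    have h0 : |((T ^ n) x - z₀ : ∀ _ : ℕ, ℝ) 0| ≤ ‖(T ^ n) x - z₀‖ := by
      have := lp.norm_apply_le_norm hpne0 ((T ^ n) x - z₀) 0
      simpa [Real.norm_eq_abs] using this
    have hc : ((T ^ n) x : ∀ _ : ℕ, ℝ) 0 = u n * (x : ∀ _ : ℕ, ℝ) n := by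
      rw [horbit n x 0]
      rw [hudef]
      simp
    have hsub : ((((T ^ n) x : ∀ _ : ℕ, ℝ)) - (z₀ : ∀ _ : ℕ, ℝ)) 0
        = u n * (x : ∀ _ : ℕ, ℝ) n - 2 := by
      rw [Pi.sub_apply, hc, hz₀0]
    rw [hsub] at h0
    have := hballE n hn
    have habs : |u n * (x : ∀ _ : ℕ, ℝ) n - 2| < 1 := lt_of_le_of_lt h0 this
    have := abs_lt.mp habs
    linarith [this.1]
  -- the budget estimate
  have hbudget : ∀ m ∈ E, ∀ F : Finset ℕ, (∀ n' ∈ F, n' ∈ E ∧ m < n') →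
      ∑ n' ∈ F, a (n' - m) ≤ 1 := by
    intro m hm F hF
    have hball : ‖(T ^ m) x - z₀‖ < 1 := hballE m hm
    set g : lp (fun _ : ℕ => ℝ) p := (T ^ m) x - z₀ with hgdef
    have hgn : ∀ n' ∈ F, a (n' - m) ≤ |(g : ∀ _ : ℕ, ℝ) (n' - m)| ^ q := by
      intro n' hn'
      obtain ⟨hn'E, hmn'⟩ := hF n' hn'
      have hcoordn' : (g : ∀ _ : ℕ, ℝ) (n' - m)
          = (∏ i ∈ Finset.Ioc (n' - m) n', w i) * (x : ∀ _ : ℕ, ℝ) n' := by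
        have hcoe : (g : ∀ _ : ℕ, ℝ) (n' - m)
            = ((T ^ m) x : ∀ _ : ℕ, ℝ) (n' - m) - (z₀ : ∀ _ : ℕ, ℝ) (n' - m) := by
          rw [hgdef, lp.coeFn_sub, Pi.sub_apply]
        rw [hcoe, hz₀ne (n' - m) (by omega), sub_zero]
        rw [horbit m x (n' - m)]
        rw [show (n' - m) + m = n' by omega]
      have hsplit : u (n' - m) * ∏ i ∈ Finset.Ioc (n' - m) n', w i = u n' := by
        rw [hudef]
        exact Finset.prod_Ioc_consecutive w (Nat.zero_le _) (by omega)
      have h1 : 1 ≤ u n' * (x : ∀ _ : ℕ, ℝ) n' := hcoord0 n' hn'E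
      have hup : 0 < u (n' - m) := hu _
      have hvalue : 1 / u (n' - m) ≤ |(g : ∀ _ : ℕ, ℝ) (n' - m)| := by
        have hxpos : 0 < (x : ∀ _ : ℕ, ℝ) n' := by
          by_contra hneg
          push_neg at hneg
          nlinarith [hu n']
        have hgpos : 0 < (g : ∀ _ : ℕ, ℝ) (n' - m) := by
          rw [hcoordn']
          have : 0 < ∏ i ∈ Finset.Ioc (n' - m) n', w i :=
            Finset.prod_pos fun i _ => hw i
          positivity
        rw [abs_of_pos hgpos, hcoordn']
        rw [div_le_iff₀ hup]
        calc (1:ℝ) ≤ u n' * (x : ∀ _ : ℕ, ℝ) n' := h1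
          _ = (∏ i ∈ Finset.Ioc (n' - m) n', w i) * (x : ∀ _ : ℕ, ℝ) n' * u (n' - m) := by
              rw [← hsplit]; ring
      rw [hadef]
      exact Real.rpow_le_rpow (by positivity) hvalue (le_of_lt hq)
    have hinj : Set.InjOn (fun n' => n' - m) ↑F := by
      intro a1 ha1 a2 ha2 h
      have h1 := (hF a1 ha1).2
      have h2 := (hF a2 ha2).2
      have h' : a1 - m = a2 - m := h
      omega
    calc ∑ n' ∈ F, a (n' - m) ≤ ∑ n' ∈ F, |(g : ∀ _ : ℕ, ℝ) (n' - m)| ^ q :=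
          Finset.sum_le_sum hgn
      _ = ∑ j ∈ F.image (fun n' => n' - m), |(g : ∀ _ : ℕ, ℝ) j| ^ q := by
          have hinj2 : ∀ a1 ∈ F, ∀ a2 ∈ F, a1 - m = a2 - m → a1 = a2 := by
            intro a1 ha1 a2 ha2 h
            have h1 := (hF a1 ha1).2
            have h2 := (hF a2 ha2).2
            omega
          exact (Finset.sum_image (f := fun j => |(g : ∀ _ : ℕ, ℝ) j| ^ q) hinj2).symm
      _ = ∑ j ∈ F.image (fun n' => n' - m), ‖(g : ∀ _ : ℕ, ℝ) j‖ ^ q := by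
          refine Finset.sum_congr rfl fun j _ => ?_
          rw [Real.norm_eq_abs]
      _ ≤ ‖g‖ ^ q := lp.sum_rpow_le_norm_rpow hq g _
      _ ≤ 1 := Real.rpow_le_one (norm_nonneg _) (le_of_lt hball) (le_of_lt hq)
  -- Lipschitz property of a
  set C₂ : ℝ := (max C 1) ^ q with hC₂def
  have hmaxpos : (0:ℝ) < max C 1 := lt_of_lt_of_le zero_lt_one (le_max_right C 1)
  have hC₂1 : 1 ≤ C₂ := Real.one_le_rpow (le_max_right C 1) (le_of_lt hq)
  have hLip : ∀ d, a d ≤ C₂ * a (d + 1) := by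
    intro d
    have hu1 : u (d + 1) = u d * w (d + 1) := by
      rw [hudef]
      exact Finset.prod_Ioc_succ_top (Nat.zero_le d) w
    have hineq : 1 / u d ≤ (max C 1) * (1 / u (d + 1)) := by
      have hud := hu d
      have hud1 := hu (d + 1)
      have hwle : w (d + 1) ≤ max C 1 := le_trans (hC _) (le_max_left _ _)
      have h2 : (1:ℝ) * u (d + 1) ≤ (max C 1) * u d := by
        rw [one_mul, hu1]
        nlinarith
      have h3 := (div_le_div_iff₀ hud hud1).mpr h2
      rw [mul_one_div]
      exact h3
    have h2 : a d ≤ ((max C 1) * (1 / u (d + 1))) ^ q := by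
      rw [hadef]
      exact Real.rpow_le_rpow (by have := hu d; positivity) hineq (le_of_lt hq)
    calc a d ≤ ((max C 1) * (1 / u (d + 1))) ^ q := h2
      _ = C₂ * a (d + 1) := by
          rw [Real.mul_rpow (le_of_lt hmaxpos) (by have := hu (d+1); positivity)]
  -- conclude via the combinatorial core lemma
  obtain ⟨B, hB⟩ := Stmt5Aux.core E a ha C₂ hC₂1 hLip hbudget hdens
  exact summable_of_sum_range_le (fun n => ha (n + 1)) hB
end

section
/- There exist a real number a > 1 and ε > 0 such that, setting I_u = [(1-4ε)a^u, (1+4ε)a^u] and J_u = [(1-2ε)a^u, (1+2ε)a^u] for u ∈ ℕ, one has: the upper density of ⋃_{u≥1} I_u ∩ ℕ is strictly less than 1; for all u > v ≥ 1 the intervals J_u and J_v are disjoint; and for all u > v ≥ 1, J_u − J_v ⊆ I_u (i.e., every difference x − y with x ∈ J_u, y ∈ J_v lies in I_u). -/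
open Filter Topology
open scoped Classical ENNReal

-- geometric-ish sum bound
lemma geomBound : ∀ M : ℕ, (∑ v ∈ Finset.range (M+1), (8*100^v + 1)) * 2 ≤ 34 * 100^M := by
  intro M
  induction M with
  | zero => norm_num
  | succ M ih =>
    rw [Finset.sum_range_succ, add_mul]
    have h1 : (1:ℕ) ≤ 100^M := Nat.one_le_pow _ _ (by norm_num)
    have h2 : 100^(M+1) = 100 * 100^M := by ring
    omega

lemma countBound (N : ℕ) (hN : 96 ≤ N) :
    (((Finset.range (N+1)).filter
      (· ∈ {n : ℕ | ∃ u : ℕ, 1 ≤ u ∧ (n : ℝ) ∈ Set.Icc ((1-4*(1/100))*(100:ℝ)^u) ((1+4*(1/100))*(100:ℝ)^u)})).card) * 2 ≤ N := by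
  set M := Nat.log 100 (N/96) with hM
  have hsub : ((Finset.range (N+1)).filter
      (· ∈ {n : ℕ | ∃ u : ℕ, 1 ≤ u ∧ (n : ℝ) ∈ Set.Icc ((1-4*(1/100))*(100:ℝ)^u) ((1+4*(1/100))*(100:ℝ)^u)}))
      ⊆ (Finset.range (M+1)).biUnion (fun v => Finset.Icc (96*100^v) (104*100^v)) := by
    intro n hn
    simp only [Finset.mem_filter, Finset.mem_range, Set.mem_setOf_eq] at hn
    obtain ⟨hnN, u, hu1, hlo, hhi⟩ := hn
    obtain ⟨v, rfl⟩ : ∃ v, u = v + 1 := ⟨u - 1, by omega⟩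
    have hlo' : 96 * 100^v ≤ n := by
      have : ((96 * 100^v : ℕ) : ℝ) ≤ (n : ℝ) := by
        push_cast
        calc (96:ℝ) * 100^v = (1-4*(1/100))*(100:ℝ)^(v+1) := by ring
        _ ≤ n := hlo
      exact_mod_cast this
    have hhi' : n ≤ 104 * 100^v := by
      have : (n:ℝ) ≤ ((104 * 100^v : ℕ) : ℝ) := by
        push_cast
        calc (n:ℝ) ≤ (1+4*(1/100))*(100:ℝ)^(v+1) := hhi
        _ = 104 * 100^v := by ring
      exact_mod_cast this
    have hvM : v ≤ M := by
      have h1 : 96 * 100^v ≤ N := by omega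
      have h2 : 100^v ≤ N / 96 := Nat.le_div_iff_mul_le (by norm_num) |>.2 (by omega)
      rw [hM]
      exact (Nat.le_log_iff_pow_le (by norm_num) (by omega)).2 h2
    simp only [Finset.mem_biUnion, Finset.mem_range, Finset.mem_Icc]
    exact ⟨v, by omega, hlo', hhi'⟩
  have hcard := Finset.card_le_card hsub
  have hcard2 : ((Finset.range (M+1)).biUnion (fun v => Finset.Icc (96*100^v) (104*100^v))).card
      ≤ ∑ v ∈ Finset.range (M+1), (8*100^v + 1) := by
    refine le_trans (Finset.card_biUnion_le) (Finset.sum_le_sum ?_)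
    intro v _
    rw [Nat.card_Icc]
    omega
  have hgeom := geomBound M
  have hlog : 100 ^ M ≤ N / 96 := by
    rw [hM]; exact Nat.pow_log_le_self 100 (by omega)
  have h34 : 34 * (N/96) ≤ N := by
    calc 34 * (N/96) ≤ 34 * (N/34) := by
          exact Nat.mul_le_mul_left _ (Nat.div_le_div_left (by norm_num) (by norm_num))
    _ ≤ N := Nat.mul_div_le N 34
  calc _ ≤ (∑ v ∈ Finset.range (M+1), (8*100^v + 1)) * 2 := by
        exact Nat.mul_le_mul_right _ (le_trans hcard hcard2)
  _ ≤ 34 * 100^M := hgeom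
  _ ≤ 34 * (N/96) := Nat.mul_le_mul_left _ hlog
  _ ≤ N := h34

theorem stmt9 : ∃ (a ε : ℝ), 1 < a ∧ 0 < ε ∧
    upperDensity {n : ℕ | ∃ u : ℕ, 1 ≤ u ∧ (n : ℝ) ∈ Set.Icc ((1-4*ε)*a^u) ((1+4*ε)*a^u)} < 1 ∧
    (∀ u v : ℕ, 1 ≤ v → v < u →
      Disjoint (Set.Icc ((1-2*ε)*a^u) ((1+2*ε)*a^u)) (Set.Icc ((1-2*ε)*a^v) ((1+2*ε)*a^v))) ∧
    (∀ u v : ℕ, 1 ≤ v → v < u →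
      ∀ x ∈ Set.Icc ((1-2*ε)*a^u) ((1+2*ε)*a^u), ∀ y ∈ Set.Icc ((1-2*ε)*a^v) ((1+2*ε)*a^v),
        x - y ∈ Set.Icc ((1-4*ε)*a^u) ((1+4*ε)*a^u)) := by
  refine ⟨100, 1/100, by norm_num, by norm_num, ?_, ?_, ?_⟩
  · -- upper density < 1
    have hle : upperDensity {n : ℕ | ∃ u : ℕ, 1 ≤ u ∧ (n : ℝ) ∈ Set.Icc ((1-4*(1/100))*(100:ℝ)^u) ((1+4*(1/100))*(100:ℝ)^u)} ≤ 1/2 := by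
      apply Filter.limsup_le_of_le
      · apply Filter.isCoboundedUnder_le_of_le atTop (x := (0:ℝ))
        intro n
        positivity
      · filter_upwards [Filter.eventually_ge_atTop 96] with N hN
        have h := countBound N hN
        rw [div_le_iff₀ (by positivity)]
        have h' := (Nat.cast_le (α := ℝ)).2 h
        push_cast at h'
        simp only [Set.mem_setOf_eq] at h'
        linarith
    linarith
  · -- disjointness
    intro u v hv huv
    rw [Set.disjoint_left]
    rintro x ⟨hx1, _⟩ ⟨_, hx4⟩
    have h1 : (100:ℝ)^(v+1) ≤ 100^u := pow_le_pow_right₀ (by norm_num) huv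
    have h2 : (0:ℝ) < 100^v := by positivity
    have h3 : (100:ℝ)^(v+1) = 100 * 100^v := by ring
    nlinarith
  · -- difference containment
    intro u v hv huv x ⟨hx1, hx2⟩ y ⟨hy1, hy2⟩
    have h1 : (100:ℝ)^(v+1) ≤ 100^u := pow_le_pow_right₀ (by norm_num) huv
    have h2 : (0:ℝ) < 100^v := by positivity
    have h3 : (100:ℝ)^(v+1) = 100 * 100^v := by ring
    constructor <;> nlinarith
end

section
/- Fix a > 1, ε > 0 and b ∈ ℕ, b ≥ 1. Let A ⊆ ℕ be syndetic. Then the set E = ⋃_{u∈A} ([(1-ε)a^u, (1+ε)a^u] ∩ bℕ) has positive lower density. -/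
open Filter Topology
open scoped Classical ENNReal

set_option maxHeartbeats 1000000 in
theorem stmt10 (a ε : ℝ) (ha : 1 < a) (hε : 0 < ε) (b : ℕ) (hb : 1 ≤ b)
    (A : Set ℕ) (M : ℕ) (hA : ∀ n : ℕ, ∃ k ∈ Set.Icc n (n + M), k ∈ A) :
    0 < lowerDensity {m : ℕ | ∃ u ∈ A,
      ((1-ε)*a^u ≤ (m : ℝ) ∧ (m : ℝ) ≤ (1+ε)*a^u) ∧ ∃ k : ℕ, 1 ≤ k ∧ m = b * k} := by
  set E : Set ℕ := {m : ℕ | ∃ u ∈ A,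
      ((1-ε)*a^u ≤ (m : ℝ) ∧ (m : ℝ) ≤ (1+ε)*a^u) ∧ ∃ k : ℕ, 1 ≤ k ∧ m = b * k} with hE
  set f : ℕ → ℝ := fun n => (((Finset.range (n+1)).filter (· ∈ E)).card : ℝ) / (n+1) with hf
  have ha0 : (0 : ℝ) < a := lt_trans one_pos ha
  have hb0 : (0 : ℝ) < b := by exact_mod_cast hb
  have hε1 : (0 : ℝ) < 1 + ε := by linarith
  set c : ℝ := ε / (2 * b * (1 + ε) * a ^ (M + 1)) with hc
  have hc0 : 0 < c := by positivity
  have hbound : ∀ n, f n ≤ 1 := by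
    intro n
    rw [hf]
    have h1 : (((Finset.range (n+1)).filter (· ∈ E)).card : ℝ) ≤ (n + 1 : ℝ) := by
      have := Finset.card_filter_le (Finset.range (n+1)) (· ∈ E)
      rw [Finset.card_range] at this
      exact_mod_cast this
    have h2 : (0 : ℝ) < (n : ℝ) + 1 := by positivity
    rw [div_le_one h2]
    exact h1
  -- choose N0
  set X : ℝ := max (b : ℝ) ((b : ℝ) / ε) with hX
  obtain ⟨N0, hN0⟩ := exists_nat_ge (max ((1+ε) * a ^ M) ((1+ε) * a ^ (M+1) * X))
  have key : ∀ᶠ n in atTop, c ≤ f n := by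
    filter_upwards [eventually_ge_atTop (max N0 1)] with n hn
    have hn1 : 1 ≤ n := le_trans (le_max_right _ _) hn
    have hnN0 : N0 ≤ n := le_trans (le_max_left _ _) hn
    have hnN0' : (max ((1+ε) * a ^ M) ((1+ε) * a ^ (M+1) * X)) ≤ (n : ℝ) :=
      le_trans hN0 (by exact_mod_cast hnN0)
    -- find t with (1+ε) a^(t+M) ≤ n < (1+ε) a^(t+M+1)
    have hex : ∃ t : ℕ, (n : ℝ) < (1+ε) * a ^ (t + M + 1) := by
      obtain ⟨j, hj⟩ := pow_unbounded_of_one_lt (n : ℝ) ha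
      refine ⟨j, lt_of_lt_of_le hj ?_⟩
      calc a ^ j ≤ a ^ (j + M + 1) := pow_le_pow_right₀ ha.le (by omega)
        _ ≤ (1+ε) * a ^ (j + M + 1) := by nlinarith [pow_pos ha0 (j + M + 1)]
    set t := Nat.find hex with ht
    have hup : (n : ℝ) < (1+ε) * a ^ (t + M + 1) := Nat.find_spec hex
    have hlow : (1+ε) * a ^ (t + M) ≤ (n : ℝ) := by
      rcases Nat.eq_zero_or_pos t with h0 | hpos
      · rw [h0]
        simpa using le_trans (le_max_left _ _) hnN0'
      · have := Nat.find_min hex (Nat.sub_lt hpos one_pos)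
        push_neg at this
        have heq : t - 1 + M + 1 = t + M := by omega
        rwa [heq] at this
    obtain ⟨u, hu, huA⟩ := hA t
    obtain ⟨hu1, hu2⟩ := hu
    have hatu : a ^ t ≤ a ^ u := pow_le_pow_right₀ ha.le hu1
    have hauM : a ^ u ≤ a ^ (t + M) := pow_le_pow_right₀ ha.le (by omega)
    have haU : (1+ε) * a ^ u ≤ (n : ℝ) :=
      le_trans (by nlinarith) hlow
    -- a^t is large
    have hXt : X ≤ a ^ t := by
      have h1 : (1+ε) * a ^ (M+1) * X ≤ (n : ℝ) := le_trans (le_max_right _ _) hnN0'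
      have h2 : (n : ℝ) < (1+ε) * a ^ (M+1) * a ^ t := by
        have : a ^ (t + M + 1) = a ^ (M + 1) * a ^ t := by rw [← pow_add]; ring_nf
        rw [this] at hup; linarith [hup]
      have h3 : (0 : ℝ) < (1+ε) * a ^ (M+1) := by positivity
      nlinarith
    have hXu : X ≤ a ^ u := le_trans hXt hatu
    have hub : (b : ℝ) ≤ a ^ u := le_trans (le_max_left _ _) hXu
    have hubε : (b : ℝ) / ε ≤ a ^ u := le_trans (le_max_right _ _) hXu
    have hεau : (b : ℝ) ≤ ε * a ^ u := by
      rw [div_le_iff₀ hε] at hubε; linarith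
    -- counting
    set k2 : ℕ := ⌊(1+ε) * a ^ u / b⌋₊ with hk2
    set k1 : ℕ := max 1 ⌈(1-ε) * a ^ u / b⌉₊ with hk1
    have hk2lb : (1+ε) * a ^ u / b - 1 < (k2 : ℝ) := by
      have := Nat.sub_one_lt_floor ((1+ε) * a ^ u / b)
      exact_mod_cast this
    have hk2ub : (k2 : ℝ) ≤ (1+ε) * a ^ u / b :=
      Nat.floor_le (by positivity)
    -- every b*k for k ∈ [k1,k2] lies in the filtered set
    have hmem : ∀ k ∈ Finset.Icc k1 k2, b * k ∈ (Finset.range (n+1)).filter (· ∈ E) := by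
      intro k hk
      rw [Finset.mem_Icc] at hk
      obtain ⟨hka, hkb⟩ := hk
      have hk1' : 1 ≤ k := le_trans (le_max_left _ _) hka
      have hbk_ub : ((b * k : ℕ) : ℝ) ≤ (1+ε) * a ^ u := by
        push_cast
        have : (k : ℝ) ≤ k2 := by exact_mod_cast hkb
        calc (b : ℝ) * k ≤ (b : ℝ) * k2 := by nlinarith
          _ ≤ (1+ε) * a ^ u := by
              rw [← le_div_iff₀' hb0] at *
              linarith [hk2ub]
      have hbk_lb : (1-ε) * a ^ u ≤ ((b * k : ℕ) : ℝ) := by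
        push_cast
        have hceil : ((1-ε) * a ^ u / b) ≤ (⌈(1-ε) * a ^ u / b⌉₊ : ℝ) := Nat.le_ceil _
        have : (⌈(1-ε) * a ^ u / b⌉₊ : ℝ) ≤ (k : ℝ) := by
          exact_mod_cast le_trans (le_max_right 1 _) hka
        have h4 : (1-ε) * a ^ u / b ≤ (k : ℝ) := by linarith
        rw [div_le_iff₀ hb0] at h4
        linarith [h4]
      refine Finset.mem_filter.mpr ⟨?_, ?_⟩
      · rw [Finset.mem_range]
        have : ((b * k : ℕ) : ℝ) ≤ (n : ℝ) := le_trans hbk_ub haU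
        have := Nat.cast_le (α := ℝ) |>.mp this
        omega
      · exact ⟨u, huA, ⟨hbk_lb, hbk_ub⟩, k, hk1', rfl⟩
    have hinj : Set.InjOn (fun k => b * k) (Finset.Icc k1 k2) := by
      intro x _ y _ hxy
      simp only at hxy
      exact Nat.eq_of_mul_eq_mul_left (by omega) hxy
    have hcard : (Finset.Icc k1 k2).card ≤ ((Finset.range (n+1)).filter (· ∈ E)).card :=
      Finset.card_le_card_of_injOn _ hmem hinj
    -- lower bound on card Icc
    have hIcc_lb : ε * a ^ u / b ≤ ((Finset.Icc k1 k2).card : ℝ) := by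
      have hcount : (k2 : ℝ) + 1 - (k1 : ℝ) ≥ ε * a ^ u / b := by
        rcases le_or_gt (⌈(1-ε) * a ^ u / b⌉₊) 1 with hle | hgt
        · have hk1eq : k1 = 1 := by rw [hk1]; omega
          rw [hk1eq]
          have : (1 : ℝ) ≤ a ^ u / b := by rw [le_div_iff₀ hb0]; linarith
          push_cast
          have : ε * a ^ u / b + 1 ≤ (1 + ε) * a ^ u / b := by
            rw [div_add' _ _ _ (ne_of_gt hb0), div_le_div_iff₀ hb0 hb0]
            nlinarith
          linarith
        · have hk1eq : k1 = ⌈(1-ε) * a ^ u / b⌉₊ := by rw [hk1]; omega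
          have hx0 : (0 : ℝ) < (1-ε) * a ^ u / b := by
            by_contra h
            push_neg at h
            have : ⌈(1-ε) * a ^ u / b⌉₊ = 0 := Nat.ceil_eq_zero.mpr h
            omega
          have hceil : (k1 : ℝ) < (1-ε) * a ^ u / b + 1 := by
            rw [hk1eq]
            exact Nat.ceil_lt_add_one hx0.le
          have hε1' : (1 : ℝ) ≤ ε * a ^ u / b := by
            rw [le_div_iff₀ hb0]; linarith
          have hsplit : (1+ε) * a ^ u / b - ((1-ε) * a ^ u / b) = 2 * (ε * a ^ u / b) := by
            field_simp; ring
          nlinarith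
      have hk1le : k1 ≤ k2 + 1 := by
        have h01 : (0 : ℝ) < ε * a ^ u / b := by positivity
        have : (k1 : ℝ) ≤ (k2 : ℝ) + 1 := by linarith
        exact_mod_cast this
      rw [Nat.card_Icc]
      push_cast [Nat.cast_sub hk1le]
      linarith
    -- combine
    have hcard' : ε * a ^ u / b ≤ (((Finset.range (n+1)).filter (· ∈ E)).card : ℝ) :=
      le_trans hIcc_lb (by exact_mod_cast hcard)
    have hn_ub : (n : ℝ) + 1 ≤ 2 * (1+ε) * a ^ (M+1) * a ^ u := by
      have h1 : (n : ℝ) + 1 ≤ 2 * n := by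
        have : (1 : ℝ) ≤ n := by exact_mod_cast hn1
        linarith
      have h2 : a ^ (t + M + 1) = a ^ (M + 1) * a ^ t := by rw [← pow_add]; ring_nf
      have h3 : (n : ℝ) < (1+ε) * (a ^ (M+1) * a ^ t) := by rw [← h2]; exact hup
      have h4 : a ^ (M+1) * a ^ t ≤ a ^ (M+1) * a ^ u := by
        have := pow_pos ha0 (M+1); nlinarith
      nlinarith
    rw [hf]
    have hpos : (0 : ℝ) < (n : ℝ) + 1 := by positivity
    rw [le_div_iff₀ hpos]
    calc c * ((n : ℝ) + 1) ≤ c * (2 * (1+ε) * a ^ (M+1) * a ^ u) := by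
          have : (0:ℝ) < c := hc0
          nlinarith
      _ = ε * a ^ u / b := by
          rw [hc]; field_simp
      _ ≤ _ := hcard'
  have hcob : IsCoboundedUnder (· ≥ ·) atTop f :=
    isCoboundedUnder_ge_of_le atTop hbound
  calc (0 : ℝ) < c := hc0
    _ ≤ liminf f atTop := le_liminf_of_le hcob key
end

section
/- Let X be a separable Banach space and T ∈ L(X) an invertible frequently hypercyclic operator. Then T^{-1} is U-frequently hypercyclic. -/
open Filter Topology
open scoped Classical ENNReal

/-- If a set has positive lower density then it is infinite (frequently hit). -/
lemma freq_of_pos_lowerDensity {A : Set ℕ} (h : 0 < lowerDensity A) :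
    ∃ᶠ n in atTop, n ∈ A := by
  by_contra hc
  rw [Filter.not_frequently] at hc
  obtain ⟨N, hN⟩ := eventually_atTop.mp hc
  have hle : ∀ n : ℕ, (((Finset.range (n+1)).filter (· ∈ A)).card : ℝ) / (n+1) ≤ (N:ℝ) / (n+1) := by
    intro n
    have hsub : (Finset.range (n+1)).filter (· ∈ A) ⊆ Finset.range N := by
      intro m hm
      simp only [Finset.mem_filter, Finset.mem_range] at hm ⊢
      by_contra hmN
      exact hN m (by omega) hm.2
    have := Finset.card_le_card hsub
    have : (((Finset.range (n+1)).filter (· ∈ A)).card : ℝ) ≤ N := by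
      simpa using (Nat.cast_le (α := ℝ)).mpr this
    gcongr
  have htend : Tendsto (fun n : ℕ => ((N:ℝ)) / (n+1)) atTop (𝓝 0) := by
    have : Tendsto (fun n : ℕ => ((n:ℝ)+1)) atTop atTop := by
      exact tendsto_natCast_atTop_atTop.atTop_add tendsto_const_nhds
    exact Tendsto.div_atTop tendsto_const_nhds this
  have hzero : Tendsto (fun n : ℕ => (((Finset.range (n+1)).filter (· ∈ A)).card : ℝ) / (n+1))
      atTop (𝓝 0) := by
    apply squeeze_zero (fun n => by positivity) hle htend
  have : lowerDensity A = 0 := by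
    unfold lowerDensity
    exact hzero.liminf_eq
  linarith

section aux

variable {X : Type*} [NormedAddCommGroup X] [NormedSpace ℝ X]

lemma symm_pow_apply (T : X ≃L[ℝ] X) :
    ∀ j n : ℕ, j ≤ n → ∀ x : X,
      (((T.symm : X →L[ℝ] X)) ^ j) ((((T : X →L[ℝ] X)) ^ n) x)
        = (((T : X →L[ℝ] X)) ^ (n - j)) x := by
  intro j
  induction j with
  | zero => intro n _ x; simp
  | succ j ih =>
    intro n hj x
    obtain ⟨m, rfl⟩ : ∃ m, n = m + 1 := ⟨n - 1, by omega⟩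
    have h1 : (((T : X →L[ℝ] X)) ^ (m+1)) x = (T : X →L[ℝ] X) ((((T : X →L[ℝ] X)) ^ m) x) := by
      rw [pow_succ']; rfl
    have h2 : (((T.symm : X →L[ℝ] X)) ^ (j+1)) ((((T : X →L[ℝ] X)) ^ (m+1)) x)
        = (((T.symm : X →L[ℝ] X)) ^ j) ((T.symm : X →L[ℝ] X) ((((T : X →L[ℝ] X)) ^ (m+1)) x)) := by
      rw [pow_succ]; rfl
    rw [h2, h1]
    have h3 : (T.symm : X →L[ℝ] X) ((T : X →L[ℝ] X) ((((T : X →L[ℝ] X)) ^ m) x))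
        = (((T : X →L[ℝ] X)) ^ m) x := by simp
    rw [h3, ih m (by omega) x]
    have : m + 1 - (j + 1) = m - j := by omega
    rw [this]

/-- the count of backward visits of `T^n x` equals the count of forward visits of `x`. -/
lemma count_eq (T : X ≃L[ℝ] X) (x : X) (U : Set X) (n : ℕ) :
    ((Finset.range (n+1)).filter
        (fun j => (((T.symm : X →L[ℝ] X)) ^ j) ((((T : X →L[ℝ] X)) ^ n) x) ∈ U)).card
      = ((Finset.range (n+1)).filter (fun m => (((T : X →L[ℝ] X)) ^ m) x ∈ U)).card := by
  apply Finset.card_nbij' (fun j => n - j) (fun m => n - m)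
  · intro a ha
    simp only [Finset.mem_coe, Finset.mem_filter, Finset.mem_range] at ha ⊢
    refine ⟨by omega, ?_⟩
    rw [← symm_pow_apply T a n (by omega) x]
    exact ha.2
  · intro a ha
    simp only [Finset.mem_coe, Finset.mem_filter, Finset.mem_range] at ha ⊢
    refine ⟨by omega, ?_⟩
    rw [symm_pow_apply T (n - a) n (by omega) x]
    have : n - (n - a) = a := by omega
    rw [this]
    exact ha.2
  · intro a ha
    simp only [Finset.mem_coe, Finset.mem_filter, Finset.mem_range] at ha
    beta_reduce
    omega
  · intro a ha
    simp only [Finset.mem_coe, Finset.mem_filter, Finset.mem_range] at ha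
    beta_reduce
    omega

end aux

/-- openness of sets defined by a count condition -/
lemma isOpen_count_ge {X : Type*} [TopologicalSpace X] {U : Set X} (hU : IsOpen U)
    (p : ℕ → X → X) (hp : ∀ j, Continuous (p j)) (n m : ℕ) :
    IsOpen {y : X | m ≤ ((Finset.range n).filter (fun j => p j y ∈ U)).card} := by
  have : {y : X | m ≤ ((Finset.range n).filter (fun j => p j y ∈ U)).card}
      = ⋃ t ∈ (Finset.range n).powerset.filter (fun t => m ≤ t.card),
          ⋂ j ∈ t, (p j) ⁻¹' U := by
    ext y
    simp only [Set.mem_setOf_eq, Set.mem_iUnion, Finset.mem_filter, Finset.mem_powerset,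
      Set.mem_iInter, Set.mem_preimage, exists_prop]
    constructor
    · intro h
      exact ⟨(Finset.range n).filter (fun j => p j y ∈ U),
        ⟨Finset.filter_subset _ _, h⟩, fun j hj => (Finset.mem_filter.mp hj).2⟩
    · rintro ⟨t, ⟨hts, htm⟩, hty⟩
      calc m ≤ t.card := htm
        _ ≤ _ := Finset.card_le_card (fun j hj =>
            Finset.mem_filter.mpr ⟨hts hj, hty j hj⟩)
  rw [this]
  apply isOpen_biUnion
  intro t _
  exact isOpen_biInter_finset (fun j _ => (hU.preimage (hp j)))


lemma lower_count {A : Set ℕ} (h : 0 < lowerDensity A) :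
    ∀ᶠ n in atTop, lowerDensity A / 2 * (n + 1) ≤
      (((Finset.range (n+1)).filter (· ∈ A)).card : ℝ) := by
  have hbdd : IsBoundedUnder (· ≥ ·) atTop
      (fun n : ℕ => (((Finset.range (n+1)).filter (· ∈ A)).card : ℝ) / (n+1)) :=
    isBoundedUnder_of ⟨0, fun n => by positivity⟩
  have h1 : lowerDensity A / 2 < liminf
      (fun n : ℕ => (((Finset.range (n+1)).filter (· ∈ A)).card : ℝ) / (n+1)) atTop := by
    rw [show liminf (fun n : ℕ => (((Finset.range (n+1)).filter (· ∈ A)).card : ℝ) / (n+1)) atTop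
        = lowerDensity A from rfl]
    linarith
  filter_upwards [eventually_lt_of_lt_liminf h1 hbdd] with n hn
  have hpos : (0:ℝ) < n + 1 := by positivity
  rw [lt_div_iff₀ hpos] at hn
  linarith

lemma upper_from_freq {A : Set ℕ} {c : ℝ} (hc : 0 < c)
    (h : ∀ N : ℕ, ∃ n, N ≤ n ∧ c * (n + 1) ≤ (((Finset.range (n+1)).filter (· ∈ A)).card : ℝ)) :
    0 < upperDensity A := by
  have hfreq : ∃ᶠ n in atTop,
      c ≤ (((Finset.range (n+1)).filter (· ∈ A)).card : ℝ) / (n+1) := by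
    rw [frequently_atTop]
    intro N
    obtain ⟨n, hn, hcn⟩ := h N
    refine ⟨n, hn, ?_⟩
    have hpos : (0:ℝ) < n + 1 := by positivity
    rw [le_div_iff₀ hpos]
    linarith
  have hbdd : IsBoundedUnder (· ≤ ·) atTop
      (fun n : ℕ => (((Finset.range (n+1)).filter (· ∈ A)).card : ℝ) / (n+1)) := by
    refine isBoundedUnder_of ⟨1, fun n => ?_⟩
    have h1 : ((Finset.range (n+1)).filter (· ∈ A)).card ≤ n + 1 := by
      calc _ ≤ (Finset.range (n+1)).card := Finset.card_filter_le _ _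
        _ = n + 1 := Finset.card_range _
    have hpos : (0:ℝ) < n + 1 := by positivity
    rw [div_le_one hpos]
    exact_mod_cast h1
  have := le_limsup_of_frequently_le hfreq hbdd
  calc (0:ℝ) < c := hc
    _ ≤ _ := this

theorem stmt16 {X : Type*} [NormedAddCommGroup X] [NormedSpace ℝ X] [CompleteSpace X]
    [TopologicalSpace.SeparableSpace X]
    (T : X ≃L[ℝ] X) (hT : ∃ x, freqHCVec (T : X →L[ℝ] X) x) :
    ∃ y, uFreqHCVec (T.symm : X →L[ℝ] X) y := by
  obtain ⟨x, hx⟩ := hT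
  obtain ⟨b, hbc, hbe, hbb⟩ := TopologicalSpace.exists_countable_basis X
  obtain ⟨e, he⟩ := (hbc.insert Set.univ).exists_eq_range (Set.insert_nonempty _ _)
  have hmem : ∀ k, e k ∈ insert Set.univ b := by
    intro k; rw [he]; exact Set.mem_range_self k
  have heopen : ∀ k, IsOpen (e k) := by
    intro k
    rcases hmem k with h | h
    · rw [h]; exact isOpen_univ
    · exact hbb.isOpen h
  have hene : ∀ k, (e k).Nonempty := by
    intro k
    rcases hmem k with h | h
    · rw [h]; exact ⟨x, trivial⟩
    · rcases Set.eq_empty_or_nonempty (e k) with he' | he'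
      · exact absurd (he' ▸ h) hbe
      · exact he'
  set δ : ℕ → ℝ := fun k => lowerDensity {n : ℕ | ((T : X →L[ℝ] X) ^ n) x ∈ e k} with hδ
  have hδpos : ∀ k, 0 < δ k := fun k => hx (e k) (heopen k) (hene k)
  -- the dense open sets
  have key : ∀ k N : ℕ, ∃ G : Set X, IsOpen G ∧ Dense G ∧
      ∀ y ∈ G, ∃ n, N ≤ n ∧ δ k / 2 * (n + 1) ≤
        (((Finset.range (n+1)).filter
          (fun j => (((T.symm : X →L[ℝ] X)) ^ j) y ∈ e k)).card : ℝ) := by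
    intro k N
    refine ⟨{y : X | ∃ n, N ≤ n ∧ δ k / 2 * (n + 1) ≤
      (((Finset.range (n+1)).filter
        (fun j => (((T.symm : X →L[ℝ] X)) ^ j) y ∈ e k)).card : ℝ)}, ?_, ?_, fun y hy => hy⟩
    · -- open
      have heq : {y : X | ∃ n, N ≤ n ∧ δ k / 2 * (n + 1) ≤
          (((Finset.range (n+1)).filter
            (fun j => (((T.symm : X →L[ℝ] X)) ^ j) y ∈ e k)).card : ℝ)}
          = ⋃ n, ⋃ (_ : N ≤ n),
            {y : X | ⌈δ k / 2 * (n + 1)⌉₊ ≤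
              ((Finset.range (n+1)).filter
                (fun j => (((T.symm : X →L[ℝ] X)) ^ j) y ∈ e k)).card} := by
        ext y
        simp only [Set.mem_setOf_eq, Set.mem_iUnion, exists_prop]
        refine exists_congr fun n => and_congr_right fun _ => ?_
        rw [Nat.ceil_le]
      rw [heq]
      refine isOpen_iUnion fun n => isOpen_iUnion fun _ => ?_
      exact isOpen_count_ge (heopen k)
        (fun j y => (((T.symm : X →L[ℝ] X)) ^ j) y)
        (fun j => (((T.symm : X →L[ℝ] X)) ^ j).continuous) (n+1) _
    · -- dense
      rw [Metric.dense_iff]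
      intro z ε hε
      have hball : 0 < lowerDensity {n : ℕ | ((T : X →L[ℝ] X) ^ n) x ∈ Metric.ball z ε} :=
        hx _ Metric.isOpen_ball ⟨z, Metric.mem_ball_self hε⟩
      have hfreq := freq_of_pos_lowerDensity hball
      have hev := lower_count (hδpos k)
      have hN : ∀ᶠ n in atTop, N ≤ n := eventually_ge_atTop N
      obtain ⟨n, hmemball, hcount, hnN⟩ :=
        ((hfreq.and_eventually (hev.and hN)).exists)
      clear hfreq hev hN
      have hcount' : δ k / 2 * (n + 1) ≤
          (((Finset.range (n+1)).filter
            (fun m => (((T : X →L[ℝ] X)) ^ m) x ∈ e k)).card : ℝ) := by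
        refine le_trans hcount ?_
        apply le_of_eq
        congr 1
      refine ⟨(((T : X →L[ℝ] X)) ^ n) x, ?_, n, hnN, ?_⟩
      · exact hmemball
      · rw [count_eq T x (e k) n]
        exact hcount'
  choose G hGopen hGdense hGspec using key
  have : Nonempty X := ⟨0⟩
  have hdense : Dense (⋂ p : ℕ × ℕ, G p.1 p.2) :=
    dense_iInter_of_isOpen (fun p => hGopen p.1 p.2) (fun p => hGdense p.1 p.2)
  obtain ⟨y, hy⟩ := hdense.nonempty
  refine ⟨y, ?_⟩
  intro U hU hUne
  obtain ⟨u, hu⟩ := hUne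
  obtain ⟨v, hvb, huv, hvU⟩ := hbb.exists_subset_of_mem_open hu hU
  have : v ∈ Set.range e := by rw [← he]; exact Set.mem_insert_of_mem _ hvb
  obtain ⟨k, hk⟩ := this
  have hck : 0 < δ k / 2 := by have := hδpos k; linarith
  apply upper_from_freq hck
  intro N
  have hyG : y ∈ G k N := Set.mem_iInter.mp hy (k, N)
  obtain ⟨n, hnN, hcount⟩ := hGspec k N y hyG
  refine ⟨n, hnN, le_trans hcount ?_⟩
  have hsub : (Finset.range (n+1)).filter (fun j => (((T.symm : X →L[ℝ] X)) ^ j) y ∈ e k)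
      ⊆ (Finset.range (n+1)).filter (· ∈ {m : ℕ | (((T.symm : X →L[ℝ] X)) ^ m) y ∈ U}) := by
    intro j hj
    simp only [Finset.mem_filter, Set.mem_setOf_eq] at hj ⊢
    refine ⟨hj.1, ?_⟩
    rw [hk] at hj
    exact hvU hj.2
  exact_mod_cast Nat.cast_le.mpr (Finset.card_le_card hsub)
end

section
/- Let X be a separable Banach space and T ∈ L(X) U-frequently hypercyclic. Then the set UFHC(T) of U-frequently hypercyclic vectors is residual in X (contains a dense Gδ set). -/
open Filter Topology
open scoped Classical ENNReal

/-! ### Auxiliary lemmas -/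

/-- The density sequence of a set of naturals. -/
noncomputable def densSeq (A : Set ℕ) (n : ℕ) : ℝ :=
  (((Finset.range (n+1)).filter (· ∈ A)).card : ℝ) / (n+1)

lemma densSeq_nonneg (A : Set ℕ) (n : ℕ) : 0 ≤ densSeq A n := by
  apply div_nonneg (by positivity) (by positivity)

lemma densSeq_le_one (A : Set ℕ) (n : ℕ) : densSeq A n ≤ 1 := by
  rw [densSeq, div_le_one (by positivity)]
  calc (((Finset.range (n+1)).filter (· ∈ A)).card : ℝ)
      ≤ ((Finset.range (n+1)).card : ℝ) := by
        exact_mod_cast Finset.card_le_card (Finset.filter_subset _ _)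
    _ = ((n:ℝ)+1) := by simp
    _ ≤ _ := le_refl _

lemma upperDensity_eq (A : Set ℕ) : upperDensity A = limsup (densSeq A) atTop := rfl

lemma densSeq_bddAbove (A : Set ℕ) : IsBoundedUnder (· ≤ ·) atTop (densSeq A) :=
  isBoundedUnder_of ⟨1, densSeq_le_one A⟩

lemma densSeq_bddBelow (A : Set ℕ) : IsBoundedUnder (· ≥ ·) atTop (densSeq A) :=
  isBoundedUnder_of ⟨0, densSeq_nonneg A⟩

lemma upperDensity_mono {A B : Set ℕ} (h : A ⊆ B) : upperDensity A ≤ upperDensity B := by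
  rw [upperDensity_eq, upperDensity_eq]
  refine limsup_le_limsup (Eventually.of_forall fun n => ?_)
    ((densSeq_bddBelow A).isCoboundedUnder_le) (densSeq_bddAbove B)
  apply div_le_div_of_nonneg_right ?_ (by positivity)
  exact_mod_cast Finset.card_le_card (Finset.monotone_filter_right _ (fun a _ ha => h ha))

lemma count_shift (P : ℕ → Prop) (p n : ℕ) :
    ((Finset.range (n+p+1)).filter P).card ≤
      p + ((Finset.range (n+1)).filter (fun j => P (j+p))).card := by
  have hsub : (Finset.range (n+p+1)).filter P ⊆
      Finset.range p ∪ ((Finset.range (n+1)).filter (fun j => P (j+p))).image (· + p) := by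
    intro m hm
    simp only [Finset.mem_filter, Finset.mem_range] at hm
    rcases lt_or_ge m p with h | h
    · exact Finset.mem_union_left _ (Finset.mem_range.mpr h)
    · refine Finset.mem_union_right _ ?_
      refine Finset.mem_image.mpr ⟨m - p, ?_, by omega⟩
      simp only [Finset.mem_filter, Finset.mem_range]
      refine ⟨by omega, ?_⟩
      rw [Nat.sub_add_cancel h]; exact hm.2
  calc ((Finset.range (n+p+1)).filter P).card
      ≤ (Finset.range p ∪ ((Finset.range (n+1)).filter (fun j => P (j+p))).image (· + p)).card :=
        Finset.card_le_card hsub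
    _ ≤ p + ((Finset.range (n+1)).filter (fun j => P (j+p))).card := by
        refine le_trans (Finset.card_union_le _ _) ?_
        exact Nat.add_le_add (Finset.card_range p).le Finset.card_image_le

theorem stmt17 {X : Type*} [NormedAddCommGroup X] [NormedSpace ℝ X] [CompleteSpace X]
    [TopologicalSpace.SeparableSpace X]
    (T : X →L[ℝ] X) (hT : ∃ x, uFreqHCVec T x) :
    {x : X | uFreqHCVec T x} ∈ residual X := by
  obtain ⟨x, hx⟩ := hT
  obtain ⟨b, hbc, hbne, hbB⟩ := TopologicalSpace.exists_countable_basis X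
  have hbnonempty : b.Nonempty := by
    obtain ⟨s, hs, _, _⟩ := hbB.exists_subset_of_mem_open (Set.mem_univ (0:X)) isOpen_univ
    exact ⟨s, hs⟩
  obtain ⟨u, hu⟩ := hbc.exists_eq_range hbnonempty
  have huo : ∀ k, IsOpen (u k) := fun k => hbB.isOpen (hu ▸ Set.mem_range_self k)
  have hune : ∀ k, (u k).Nonempty := by
    intro k
    rw [Set.nonempty_iff_ne_empty]
    intro h
    exact hbne (h ▸ (hu ▸ Set.mem_range_self k))
  set A : ℕ → Set ℕ := fun k => {n | (T^n) x ∈ u k} with hA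
  set δ : ℕ → ℝ := fun k => upperDensity (A k) with hδdef
  have hδpos : ∀ k, 0 < δ k := fun k => hx (u k) (huo k) (hune k)
  set O : ℕ → ℕ → Set X := fun k n =>
    {y | δ k / 2 ≤ densSeq {m : ℕ | (T^m) y ∈ u k} n} with hO
  have hOopen : ∀ k n, IsOpen (O k n) := by
    intro k n
    rw [isOpen_iff_mem_nhds]
    intro y hy
    set S := (Finset.range (n+1)).filter (fun j => (T^j) y ∈ u k) with hS
    have hInt : ∀ᶠ z in 𝓝 y, ∀ j ∈ S, (T^j) z ∈ u k := by
      rw [eventually_all_finset]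
      intro j hj
      exact ((huo k).preimage (T^j).continuous).mem_nhds
        (Finset.mem_filter.mp hj).2
    filter_upwards [hInt] with z hz
    have hsub : S ⊆ (Finset.range (n+1)).filter (· ∈ {m : ℕ | (T^m) z ∈ u k}) := by
      intro j hj
      exact Finset.mem_filter.mpr ⟨(Finset.mem_filter.mp hj).1, hz j hj⟩
    have hyS : δ k / 2 ≤ (S.card : ℝ) / (n+1) := by
      have h := hy
      simp only [hO, Set.mem_setOf_eq, densSeq] at h
      exact h
    refine le_trans hyS ?_
    apply div_le_div_of_nonneg_right ?_ (by positivity)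
    exact_mod_cast Finset.card_le_card hsub
  -- orbit of x is dense
  have horb : Dense (Set.range fun p : ℕ => (T^p) x) := by
    rw [dense_iff_inter_open]
    intro U hUo hUne
    obtain ⟨n, hn⟩ : ∃ n, (T^n) x ∈ U := by
      by_contra hcon
      push_neg at hcon
      have h0 : densSeq {n : ℕ | (T^n) x ∈ U} = fun _ => (0:ℝ) := by
        funext n
        unfold densSeq
        rw [div_eq_zero_iff]
        left
        norm_cast
        rw [Finset.card_eq_zero]
        exact Finset.filter_false_of_mem (fun j _ => hcon j)
      have hpos := hx U hUo hUne
      rw [upperDensity_eq, h0, limsup_const] at hpos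
      exact lt_irrefl _ hpos
    exact ⟨(T^n) x, hn, n, rfl⟩
  set V : ℕ → ℕ → Set X := fun k N => ⋃ n, ⋃ _ : N ≤ n, O k n with hV
  have hVopen : ∀ k N, IsOpen (V k N) :=
    fun k N => isOpen_iUnion fun n => isOpen_iUnion fun _ => hOopen k n
  have hVdense : ∀ k N, Dense (V k N) := by
    intro k N
    refine horb.mono ?_
    rintro _ ⟨p, rfl⟩
    -- frequently the density is above 3δ/4
    have hfreq : ∃ᶠ m in atTop, 3 * δ k / 4 < densSeq (A k) m := by
      apply frequently_lt_of_lt_limsup ((densSeq_bddBelow (A k)).isCoboundedUnder_le)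
      rw [← upperDensity_eq]
      have hh : δ k = upperDensity (A k) := rfl
      linarith [hδpos k]
    have hbig : ∀ᶠ m in atTop, (N + p ≤ m ∧ 4 * p / δ k ≤ (m:ℝ)) := by
      refine (eventually_ge_atTop (N+p)).and ?_
      exact tendsto_natCast_atTop_atTop.eventually_ge_atTop (4 * p / δ k)
    obtain ⟨m, hm1, hm2, hm3⟩ := (hfreq.and_eventually hbig).exists
    set n := m - p with hn
    have hmn : m = n + p := by omega
    simp only [hV, Set.mem_iUnion]
    refine ⟨n, by omega, ?_⟩
    -- show δ k / 2 ≤ densSeq {j | T^j (T^p x) ∈ u k} n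
    have hcard : ((Finset.range (m+1)).filter (· ∈ A k)).card ≤
        p + ((Finset.range (n+1)).filter (· ∈ {j : ℕ | (T^j) ((T^p) x) ∈ u k})).card := by
      have heq : (Finset.range (n+1)).filter (fun j => (j + p) ∈ A k) =
          (Finset.range (n+1)).filter (· ∈ {j : ℕ | (T^j) ((T^p) x) ∈ u k}) := by
        apply Finset.filter_congr
        intro j _
        show (j + p) ∈ A k ↔ (T^j) ((T^p) x) ∈ u k
        simp only [hA, Set.mem_setOf_eq, pow_add, ContinuousLinearMap.mul_apply]
      rw [← heq, hmn]
      exact count_shift _ p n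
    have hpδ : (p:ℝ) ≤ δ k / 4 * ((m:ℝ)+1) := by
      rw [div_le_iff₀ (hδpos k)] at hm3
      nlinarith [hδpos k, (Nat.cast_nonneg m : (0:ℝ) ≤ m)]
    have h1 : 3 * δ k / 4 * ((m:ℝ)+1) <
        (((Finset.range (m+1)).filter (· ∈ A k)).card : ℝ) := by
      rw [densSeq, lt_div_iff₀ (by positivity)] at hm1
      exact hm1
    have h2 : (((Finset.range (m+1)).filter (· ∈ A k)).card : ℝ) ≤
        (p:ℝ) + (((Finset.range (n+1)).filter (· ∈ {j : ℕ | (T^j) ((T^p) x) ∈ u k})).card : ℝ) := by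
      exact_mod_cast hcard
    show δ k / 2 ≤ densSeq {j : ℕ | (T^j) ((T^p) x) ∈ u k} n
    rw [densSeq, le_div_iff₀ (by positivity)]
    have hnm : ((n:ℝ)+1) ≤ ((m:ℝ)+1) := by
      have : n ≤ m := by omega
      exact_mod_cast Nat.succ_le_succ this
    nlinarith [hδpos k]
  -- conclusion
  have hG : (⋂ k, ⋂ N, V k N) ∈ residual X :=
    (countable_iInter_mem).mpr fun k => (countable_iInter_mem).mpr fun N =>
      residual_of_dense_open (hVopen k N) (hVdense k N)
  refine mem_of_superset hG ?_
  intro y hy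
  simp only [Set.mem_iInter] at hy
  intro U hUo hUne
  obtain ⟨z, hz⟩ := hUne
  obtain ⟨s, hs, hzs, hsU⟩ := hbB.exists_subset_of_mem_open hz hUo
  obtain ⟨k, rfl⟩ : ∃ k, u k = s := by rw [hu] at hs; exact hs
  have hle : upperDensity {n : ℕ | (T^n) y ∈ u k} ≤ upperDensity {n : ℕ | (T^n) y ∈ U} :=
    upperDensity_mono fun n hn => hsU hn
  have hfr : ∃ᶠ n in atTop, δ k / 2 ≤ densSeq {m : ℕ | (T^m) y ∈ u k} n := by
    rw [frequently_atTop]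
    intro N
    have h := hy k N
    simp only [hV, Set.mem_iUnion] at h
    obtain ⟨n, hn, hOn⟩ := h
    exact ⟨n, hn, hOn⟩
  have h2 : δ k / 2 ≤ upperDensity {n : ℕ | (T^n) y ∈ u k} := by
    rw [upperDensity_eq]
    exact le_limsup_of_frequently_le hfr (densSeq_bddAbove _)
  linarith [hδpos k]
end
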